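/- arXiv:1205.6006 — 2 statements merged into one kernel-verified Lean document; each statement's English description precedes it below -/
import Mathlib

section
/- In the formal power series ring ℤ[[t, z_1, …, z_r]], writing z^α = z_1^{m_1}⋯z_r^{m_r} for α = m_1α_1 + ⋯ + m_rα_r in the positive root lattice of B_r, one has ∏_{α ∈ Φ⁺(B_r)} (1 − t·z^{α})·(1 − z^{α})^{-1} = Σ_{T ∈ 𝒯(∞)} (1 − t)^{seg(T)} · z^{−wt(T)}, where Φ⁺(B_r) = {β_{i,k} : 1 ≤ i ≤ k ≤ r} ∪ {γ_{i,k} : 1 ≤ i < k ≤ r} and the right-hand side is a well-defined formal power series because for each monomial only finitely many T ∈ 𝒯(∞) contribute. -/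
open MvPowerSeries Finset

def betaB (r : ℕ) (i k : ℕ) : Fin r → ℕ :=
  fun j => if i ≤ j.1 + 1 ∧ j.1 + 1 ≤ k then 1 else 0

def gammaB (r : ℕ) (i k : ℕ) : Fin r → ℕ :=
  fun j => if i ≤ j.1 + 1 ∧ j.1 + 1 ≤ k - 1 then 1 else if k ≤ j.1 + 1 then 2 else 0

def posRootsB (r : ℕ) : Finset (Fin r → ℕ) :=
  ((Finset.Icc 1 r ×ˢ Finset.Icc 1 r).filter fun p => p.1 ≤ p.2).image
      (fun p => betaB r p.1 p.2) ∪
    ((Finset.Icc 1 r ×ˢ Finset.Icc 1 r).filter fun p => p.1 < p.2).image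
      (fun p => gammaB r p.1 p.2)

def rootOf (r : ℕ) (p : Fin r × Fin r) : Fin r → ℕ :=
  if p.1 ≤ p.2 then betaB r (p.1.1+1) (p.2.1+1) else gammaB r (p.2.1+1) (p.1.1+1)

section S4
variable (r : ℕ)

lemma beta_inj {a b a' b' : ℕ} (ha : 1 ≤ a) (hab : a ≤ b) (hb : b ≤ r)
    (ha' : 1 ≤ a') (hab' : a' ≤ b') (hb' : b' ≤ r)
    (h : betaB r a b = betaB r a' b') : a = a' ∧ b = b' := by
  have key : ∀ c c' d d' : ℕ, 1 ≤ c → c ≤ d → d ≤ r → 1 ≤ c' → c' ≤ d' → d' ≤ r →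
      betaB r c d = betaB r c' d' → c' ≤ c ∧ d ≤ d' := by
    intro c c' d d' h1 h2 h3 h1' h2' h3' he
    constructor
    · have := congrFun he ⟨c-1, by omega⟩
      unfold betaB at this
      simp only [show c-1+1 = c by omega] at this
      split_ifs at this <;> omega
    · have := congrFun he ⟨d-1, by omega⟩
      unfold betaB at this
      simp only [show d-1+1 = d by omega] at this
      split_ifs at this <;> omega
  have h1 := key a a' b b' ha hab hb ha' hab' hb' h
  have h2 := key a' a b' b ha' hab' hb' ha hab hb h.symm
  omega

lemma gamma_two {a b : ℕ} (ha : 1 ≤ a) (hab : a < b) (hb : b ≤ r) (j : Fin r)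
    (hj : b ≤ j.1 + 1) : gammaB r a b j = 2 := by
  unfold gammaB
  rw [if_neg (by omega), if_pos hj]

lemma gamma_inj {a b a' b' : ℕ} (ha : 1 ≤ a) (hab : a < b) (hb : b ≤ r)
    (ha' : 1 ≤ a') (hab' : a' < b') (hb' : b' ≤ r)
    (h : gammaB r a b = gammaB r a' b') : a = a' ∧ b = b' := by
  have key : ∀ c c' d d' : ℕ, 1 ≤ c → c < d → d ≤ r → 1 ≤ c' → c' < d' → d' ≤ r →
      gammaB r c d = gammaB r c' d' → c' ≤ c ∧ d ≤ d' := by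
    intro c c' d d' h1 h2 h3 h1' h2' h3' he
    constructor
    · have := congrFun he ⟨c-1, by omega⟩
      unfold gammaB at this
      simp only [show c-1+1 = c by omega] at this
      split_ifs at this <;> omega
    · have := congrFun he ⟨d'-1, by omega⟩
      unfold gammaB at this
      simp only [show d'-1+1 = d' by omega] at this
      split_ifs at this <;> omega
  have h1 := key a a' b b' ha hab hb ha' hab' hb' h
  have h2 := key a' a b' b ha' hab' hb' ha hab hb h.symm
  omega

lemma beta_ne_gamma (hr : 1 ≤ r) {a b a' b' : ℕ} (ha' : 1 ≤ a') (hab' : a' < b') (hb' : b' ≤ r) :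
    betaB r a b ≠ gammaB r a' b' := by
  intro h
  have := congrFun h ⟨r-1, by omega⟩
  rw [gamma_two r ha' hab' hb' _ (by simp; omega)] at this
  unfold betaB at this
  split_ifs at this <;> omega

lemma rootOf_inj (hr : 1 ≤ r) : Function.Injective (rootOf r) := by
  intro p q h
  unfold rootOf at h
  have hp1 := p.1.2; have hp2 := p.2.2; have hq1 := q.1.2; have hq2 := q.2.2
  rcases le_or_gt p.1 p.2 with h1 | h1 <;> rcases le_or_gt q.1 q.2 with h2 | h2 <;>
    [rw [if_pos h1, if_pos h2] at h; rw [if_pos h1, if_neg (not_le.mpr h2)] at h;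
     rw [if_neg (not_le.mpr h1), if_pos h2] at h;
     rw [if_neg (not_le.mpr h1), if_neg (not_le.mpr h2)] at h] <;>
    [skip; skip; skip; skip] <;> simp only [Fin.le_def, Fin.lt_def] at h1 h2 <;> first
  | (have := beta_inj r (a := p.1.1+1) (b := p.2.1+1) (a' := q.1.1+1) (b' := q.2.1+1)
      (by omega) (by omega) (by omega) (by omega) (by omega) (by omega) h
     exact Prod.ext (Fin.ext (by omega)) (Fin.ext (by omega)))
  | exact absurd h (beta_ne_gamma r hr (by omega) (by omega) (by omega))
  | exact absurd h.symm (beta_ne_gamma r hr (by omega) (by omega) (by omega))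
  | (have := gamma_inj r (a := p.2.1+1) (b := p.1.1+1) (a' := q.2.1+1) (b' := q.1.1+1)
      (by omega) (by omega) (by omega) (by omega) (by omega) (by omega) h
     exact Prod.ext (Fin.ext (by omega)) (Fin.ext (by omega)))

lemma posRootsB_eq (hr : 1 ≤ r) :
    posRootsB r = Finset.image (rootOf r) Finset.univ := by
  ext v
  simp only [posRootsB, Finset.mem_union, Finset.mem_image, Finset.mem_filter,
    Finset.mem_product, Finset.mem_Icc, Finset.mem_univ, true_and]
  constructor
  · rintro (⟨⟨a,b⟩, ⟨⟨⟨h1,h2⟩,⟨h3,h4⟩⟩,h5⟩, rfl⟩ | ⟨⟨a,b⟩, ⟨⟨⟨h1,h2⟩,⟨h3,h4⟩⟩,h5⟩, rfl⟩)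
    · refine ⟨(⟨a-1, by omega⟩, ⟨b-1, by omega⟩), ?_⟩
      unfold rootOf
      rw [if_pos (by rw [Fin.le_def]; simp; omega)]
      simp only at h1 h2 h3 h4 h5 ⊢
      funext j
      simp only [betaB, gammaB, Fin.val_mk]
      split_ifs <;> omega
    · refine ⟨(⟨b-1, by omega⟩, ⟨a-1, by omega⟩), ?_⟩
      unfold rootOf
      rw [if_neg (by rw [Fin.le_def]; simp at *; omega)]
      simp only at h1 h2 h3 h4 h5 ⊢
      funext j
      simp only [betaB, gammaB, Fin.val_mk]
      split_ifs <;> omega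
  · rintro ⟨p, rfl⟩
    unfold rootOf
    have hp1 := p.1.2; have hp2 := p.2.2
    rcases le_or_gt p.1 p.2 with h1 | h1
    · rw [if_pos h1]
      rw [Fin.le_def] at h1
      exact Or.inl ⟨(p.1.1+1, p.2.1+1), ⟨⟨⟨by omega, by omega⟩, by omega, by omega⟩, by omega⟩, rfl⟩
    · rw [if_neg (by omega)]
      rw [Fin.lt_def] at h1
      exact Or.inr ⟨(p.2.1+1, p.1.1+1), ⟨⟨⟨by omega, by omega⟩, by omega, by omega⟩, by omega⟩, rfl⟩

lemma rootOf_ne_zero (p : Fin r × Fin r) : rootOf r p ≠ 0 := by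
  unfold rootOf
  have hp1 := p.1.2; have hp2 := p.2.2
  split
  · intro h
    have := congrFun h p.1
    unfold betaB at this
    rw [if_pos ⟨le_refl _, by rename_i hh; rw [Fin.le_def] at hh; omega⟩] at this
    simp at this
  · intro h
    have := congrFun h ⟨r-1, by omega⟩
    rw [gamma_two r (by omega) (by rename_i hh; rw [Fin.le_def] at hh; omega) (by omega) _ (by simp; omega)] at this
    simp at this

lemma rootOf_sum_pos (p : Fin r × Fin r) : 1 ≤ ∑ j, rootOf r p j := by
  by_contra h
  push_neg at h
  apply rootOf_ne_zero r p
  funext j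
  have h2 : ∀ j ∈ Finset.univ, rootOf r p j = 0 :=
    Finset.sum_eq_zero_iff.mp (by omega)
  simpa using h2 j (Finset.mem_univ j)
end S4

noncomputable def tvar (r : ℕ) : MvPowerSeries (Option (Fin r)) ℤ :=
  MvPowerSeries.X none

noncomputable def zmon (r : ℕ) (v : Fin r → ℕ) : MvPowerSeries (Option (Fin r)) ℤ :=
  MvPowerSeries.monomial (R := ℤ) (Finsupp.equivFunOnFinite.symm fun o => Option.elim o 0 v) 1

section S4b
variable (r : ℕ)

noncomputable def Ez (r : ℕ) (v : Fin r → ℕ) : Option (Fin r) →₀ ℕ :=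
  Finsupp.equivFunOnFinite.symm fun o => Option.elim o 0 v

lemma zmon_def (v : Fin r → ℕ) : zmon r v = MvPowerSeries.monomial (R := ℤ) (Ez r v) 1 := rfl

@[simp] lemma Ez_some (v : Fin r → ℕ) (j : Fin r) : Ez r v (some j) = v j := rfl
@[simp] lemma Ez_none (v : Fin r → ℕ) : Ez r v none = 0 := rfl

lemma Ez_add (u v : Fin r → ℕ) : Ez r (u + v) = Ez r u + Ez r v := by
  ext a
  cases a <;> simp [Finsupp.add_apply, Pi.add_apply]

lemma Ez_zero : Ez r 0 = 0 := by
  ext a; cases a <;> simp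

lemma Ez_eq_zero_iff (v : Fin r → ℕ) : Ez r v = 0 ↔ v = 0 := by
  constructor
  · intro h; funext j
    have := DFunLike.congr_fun h (some j)
    simpa using this
  · rintro rfl; exact Ez_zero r

@[simp] lemma zmon_zero : zmon r 0 = 1 := by
  rw [zmon_def, Ez_zero, MvPowerSeries.monomial_zero_one]

lemma zmon_mul (u v : Fin r → ℕ) : zmon r u * zmon r v = zmon r (u + v) := by
  rw [zmon_def, zmon_def, zmon_def, MvPowerSeries.monomial_mul_monomial, Ez_add, one_mul]

lemma zmon_prod {ι : Type*} (s : Finset ι) (u : ι → Fin r → ℕ) :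
    ∏ i ∈ s, zmon r (u i) = zmon r (∑ i ∈ s, u i) := by
  classical
  induction s using Finset.cons_induction with
  | empty => simp
  | cons a s ha ih => rw [Finset.prod_cons, ih, zmon_mul, Finset.sum_cons]

def zdeg (r : ℕ) (e : Option (Fin r) →₀ ℕ) : ℕ := ∑ j : Fin r, e (some j)

lemma zdeg_Ez (v : Fin r → ℕ) : zdeg r (Ez r v) = ∑ j, v j := by
  unfold zdeg; simp

/-- vanishing of coefficients of `z^u * A` for `u` of large degree -/
lemma coeff_zmon_mul_eq_zero (u : Fin r → ℕ) (A : MvPowerSeries (Option (Fin r)) ℤ)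
    (e : Option (Fin r) →₀ ℕ) (h : zdeg r e < ∑ j, u j) :
    MvPowerSeries.coeff (R := ℤ) e (zmon r u * A) = 0 := by
  rw [zmon_def, MvPowerSeries.coeff_monomial_mul, if_neg]
  intro hle
  have : ∀ j : Fin r, u j ≤ e (some j) := fun j => by
    have := hle (some j); simpa using this
  have : ∑ j, u j ≤ zdeg r e := Finset.sum_le_sum fun j _ => this j
  omega

noncomputable def gB (r : ℕ) (v : Fin r → ℕ) : MvPowerSeries (Option (Fin r)) ℤ :=
  MvPowerSeries.invOfUnit (1 - zmon r v) 1

lemma mul_gB (v : Fin r → ℕ) (hv : v ≠ 0) : (1 - zmon r v) * gB r v = 1 := by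
  apply MvPowerSeries.mul_invOfUnit
  rw [map_sub, MvPowerSeries.constantCoeff_one, zmon_def]
  have h0 : (MvPowerSeries.constantCoeff (σ := Option (Fin r)) (R := ℤ))
      ((MvPowerSeries.monomial (R := ℤ) (Ez r v)) 1) = 0 := by
    rw [← MvPowerSeries.coeff_zero_eq_constantCoeff_apply, MvPowerSeries.coeff_monomial, if_neg]
    intro h
    exact hv ((Ez_eq_zero_iff r v).mp h.symm)
  rw [h0]; simp

lemma gB_expand (v : Fin r → ℕ) (hv : v ≠ 0) : gB r v = 1 + zmon r v * gB r v := by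
  have h := mul_gB r v hv
  linear_combination h

lemma smul_succ_v (n : ℕ) (v : Fin r → ℕ) : n • v + v = (n+1) • v := by
  funext j; simp [Pi.smul_apply, smul_eq_mul]; ring

lemma gB_geom (v : Fin r → ℕ) (hv : v ≠ 0) (d : ℕ) :
    gB r v = (∑ n ∈ Finset.range (d+1), zmon r (n • v)) + zmon r ((d+1) • v) * gB r v := by
  induction d with
  | zero =>
    rw [Finset.range_one, Finset.sum_singleton, zero_smul, zmon_zero, zero_add, one_smul]
    exact gB_expand r v hv
  | succ d ih =>
    have key : zmon r ((d+1) • v) * gB r v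
        = zmon r ((d+1) • v) + zmon r ((d+1+1) • v) * gB r v := by
      nth_rewrite 1 [gB_expand r v hv]
      rw [mul_add, mul_one, ← mul_assoc, zmon_mul, smul_succ_v r]
    calc gB r v = (∑ n ∈ Finset.range (d+1), zmon r (n • v)) + zmon r ((d+1) • v) * gB r v := ih
    _ = _ := by rw [key, Finset.sum_range_succ (n := d+1)]; ring

/-- `W v n`: the `n`-th term of the expansion of `(1 - t z^v)/(1 - z^v)`. -/
noncomputable def WB (r : ℕ) (v : Fin r → ℕ) (n : ℕ) : MvPowerSeries (Option (Fin r)) ℤ :=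
  if n = 0 then 1 else (1 - tvar r) * zmon r (n • v)

lemma f_expand (v : Fin r → ℕ) (hv : v ≠ 0) (d : ℕ) :
    (1 - tvar r * zmon r v) * gB r v =
      (∑ n ∈ Finset.range (d+2), WB r v n) +
        (1 - tvar r) * (zmon r ((d+2) • v) * gB r v) := by
  have h := mul_gB r v hv
  have h1 : (1 - tvar r * zmon r v) * gB r v = 1 + (1 - tvar r) * (zmon r v * gB r v) := by
    linear_combination h
  have h2 : zmon r v * gB r v
      = (∑ n ∈ Finset.range (d+1), zmon r ((n+1) • v)) + zmon r ((d+2) • v) * gB r v := by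
    calc zmon r v * gB r v
        = zmon r v * ((∑ n ∈ Finset.range (d+1), zmon r (n • v)) + zmon r ((d+1) • v) * gB r v) := by
          rw [← gB_geom r v hv d]
      _ = (∑ n ∈ Finset.range (d+1), zmon r v * zmon r (n • v))
            + zmon r v * (zmon r ((d+1) • v) * gB r v) := by rw [mul_add, Finset.mul_sum]
      _ = _ := by
          congr 1
          · apply Finset.sum_congr rfl; intro n _
            rw [zmon_mul]; congr 1; funext j; simp [Pi.smul_apply, smul_eq_mul]; ring
          · rw [← mul_assoc, zmon_mul]; congr 2
            funext j; simp [Pi.smul_apply, smul_eq_mul]; ring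
  have h4 : ∑ n ∈ Finset.range (d+2), WB r v n
      = 1 + ∑ n ∈ Finset.range (d+1), (1 - tvar r) * zmon r ((n+1) • v) := by
    rw [Finset.sum_range_succ']
    simp only [WB, Nat.add_one_ne_zero, if_false, if_true, reduceIte]
    ring
  rw [h1, h2, h4, mul_add, Finset.mul_sum]
  ring

end S4b

section S4c
variable (r : ℕ)

/-- number of nonzero entries of a Kostant partition datum -/
def Ncard (r : ℕ) (c : Fin r × Fin r → ℕ) : ℕ :=
  (Finset.univ.filter fun p => c p ≠ 0).card

lemma WB_prod_eq (c : Fin r × Fin r → ℕ) :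
    ∏ p, WB r (rootOf r p) (c p) =
      (1 - tvar r) ^ (Ncard r c) * zmon r (∑ p, c p • rootOf r p) := by
  classical
  rw [← Finset.prod_filter_mul_prod_filter_not Finset.univ (fun p => c p ≠ 0)]
  have h2 : ∏ p ∈ Finset.univ.filter (fun p => ¬ c p ≠ 0), WB r (rootOf r p) (c p) = 1 := by
    apply Finset.prod_eq_one
    intro p hp
    simp only [Finset.mem_filter, not_not] at hp
    simp [WB, hp.2]
  rw [h2, mul_one]
  have h1 : ∀ p ∈ Finset.univ.filter (fun p => c p ≠ 0),
      WB r (rootOf r p) (c p) = (1 - tvar r) * zmon r (c p • rootOf r p) := by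
    intro p hp
    simp only [Finset.mem_filter] at hp
    simp [WB, hp.2]
  rw [Finset.prod_congr rfl h1, Finset.prod_mul_distrib, Finset.prod_const, zmon_prod]
  have hsum : (∑ i ∈ Finset.univ.filter (fun p => c p ≠ 0), c i • rootOf r i)
      = ∑ p : Fin r × Fin r, c p • rootOf r p := by
    apply Finset.sum_subset (Finset.filter_subset _ _)
    intro p _ hp
    simp only [Finset.mem_filter, Finset.mem_univ, true_and, not_not] at hp
    rw [hp, zero_smul]
  rw [hsum]
  rfl

lemma coeff_prod_reduction (hr : 1 ≤ r) (e : Option (Fin r) →₀ ℕ) :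
    MvPowerSeries.coeff (R := ℤ) e
        (∏ p : Fin r × Fin r, ((1 - tvar r * zmon r (rootOf r p)) * gB r (rootOf r p)))
      = ∑ c ∈ Fintype.piFinset (fun _ : Fin r × Fin r => Finset.range (zdeg r e + 2)),
          MvPowerSeries.coeff (R := ℤ) e
            ((1 - tvar r) ^ (Ncard r c) * zmon r (∑ p, c p • rootOf r p)) := by
  classical
  set d := zdeg r e with hd
  have hexp : ∀ p : Fin r × Fin r,
      (1 - tvar r * zmon r (rootOf r p)) * gB r (rootOf r p) =
        (∑ n ∈ Finset.range (d+2), WB r (rootOf r p) n) +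
          (1 - tvar r) * (zmon r ((d+2) • rootOf r p) * gB r (rootOf r p)) :=
    fun p => f_expand r (rootOf r p) (rootOf_ne_zero r p) d
  rw [Finset.prod_congr rfl (fun p _ => hexp p), Finset.prod_add]
  rw [map_sum]
  have hvanish : ∀ t ∈ (Finset.univ : Finset (Fin r × Fin r)).powerset, t ≠ Finset.univ →
      MvPowerSeries.coeff (R := ℤ) e
        ((∏ p ∈ t, ∑ n ∈ Finset.range (d+2), WB r (rootOf r p) n) *
          ∏ p ∈ Finset.univ \ t, (1 - tvar r) * (zmon r ((d+2) • rootOf r p) * gB r (rootOf r p))) = 0 := by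
    intro t _ ht
    have hne : (Finset.univ \ t).Nonempty := by
      rw [Finset.sdiff_nonempty]
      intro hsub
      exact ht (Finset.eq_univ_iff_forall.mpr fun x => hsub (Finset.mem_univ x))
    obtain ⟨q, hq⟩ := hne
    rw [← Finset.mul_prod_erase _ _ hq]
    have hrw : (∏ p ∈ t, ∑ n ∈ Finset.range (d+2), WB r (rootOf r p) n) *
        ((1 - tvar r) * (zmon r ((d+2) • rootOf r q) * gB r (rootOf r q)) *
          ∏ p ∈ (Finset.univ \ t).erase q, (1 - tvar r) * (zmon r ((d+2) • rootOf r p) * gB r (rootOf r p)))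
        = zmon r ((d+2) • rootOf r q) *
            ((∏ p ∈ t, ∑ n ∈ Finset.range (d+2), WB r (rootOf r p) n) *
              ((1 - tvar r) * gB r (rootOf r q) *
                ∏ p ∈ (Finset.univ \ t).erase q, (1 - tvar r) * (zmon r ((d+2) • rootOf r p) * gB r (rootOf r p)))) := by
      ring
    rw [hrw]
    apply coeff_zmon_mul_eq_zero
    have : d + 2 ≤ ∑ j, ((d+2) • rootOf r q) j := by
      have h1 : 1 ≤ ∑ j, rootOf r q j := rootOf_sum_pos r q
      calc d + 2 = (d+2) * 1 := by ring
      _ ≤ (d+2) * ∑ j, rootOf r q j := Nat.mul_le_mul_left _ h1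
      _ = ∑ j, ((d+2) • rootOf r q) j := by rw [Finset.mul_sum]; rfl
    omega
  rw [Finset.sum_eq_single_of_mem Finset.univ (Finset.mem_powerset_self _) hvanish]
  rw [Finset.sdiff_self, Finset.prod_empty, mul_one]
  rw [Finset.prod_univ_sum]
  rw [map_sum]
  apply Finset.sum_congr rfl
  intro c _
  rw [WB_prod_eq]

end S4c

section S4d
variable (r : ℕ)

lemma tvar_pow (k : ℕ) : tvar r ^ k = MvPowerSeries.monomial (R := ℤ) (Finsupp.single none k) 1 :=
  MvPowerSeries.X_pow_eq none k

lemma exp_decomp (e : Option (Fin r) →₀ ℕ) (w : Fin r → ℕ) (k : ℕ) :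
    e = Finsupp.single none k + Ez r w ↔ (k = e none ∧ (fun j => e (some j)) = w) := by
  constructor
  · intro h
    constructor
    · have := DFunLike.congr_fun h none
      simp [Finsupp.single_eq_same] at this
      omega
    · funext j
      have := DFunLike.congr_fun h (some j)
      simpa [Finsupp.single_eq_of_ne (Option.some_ne_none j).symm] using this
  · rintro ⟨hk, hw⟩
    ext a
    cases a with
    | none => simp [Finsupp.single_eq_same, hk]
    | some j =>
      simp [Finsupp.single_eq_of_ne (Option.some_ne_none j).symm]
      exact congrFun hw j

lemma coeff_tz (s : ℕ) (w : Fin r → ℕ) (e : Option (Fin r) →₀ ℕ) :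
    MvPowerSeries.coeff (R := ℤ) e ((1 - tvar r) ^ s * zmon r w) =
      if (fun j => e (some j)) = w then (-1 : ℤ)^(e none) * (s.choose (e none) : ℤ) else 0 := by
  classical
  have hpow : (1 - tvar r) ^ s = ∑ k ∈ Finset.range (s+1),
      ((-1 : ℤ)^k * (s.choose k : ℤ)) • MvPowerSeries.monomial (R := ℤ) (Finsupp.single none k) 1 := by
    have : (1 : MvPowerSeries (Option (Fin r)) ℤ) - tvar r = (-(tvar r)) + 1 := by ring
    rw [this, add_pow]
    apply Finset.sum_congr rfl
    intro k _
    rw [one_pow, neg_pow, tvar_pow]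
    rw [zsmul_eq_mul]
    push_cast
    ring
  rw [hpow, Finset.sum_mul, map_sum]
  simp only [smul_mul_assoc, zmon_def, MvPowerSeries.monomial_mul_monomial, mul_one, map_smul, map_zsmul,
    smul_eq_mul, MvPowerSeries.coeff_monomial, mul_ite, mul_one, mul_zero]
  by_cases hw : (fun j => e (some j)) = w
  · rw [if_pos hw]
    rw [Finset.sum_eq_single (e none)]
    · rw [if_pos ((exp_decomp r e w (e none)).mpr ⟨rfl, hw⟩)]
    · intro k _ hk
      rw [if_neg]
      intro hc
      exact hk ((exp_decomp r e w k).mp hc).1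
    · intro h
      simp only [Finset.mem_range, not_lt] at h
      rw [if_pos ((exp_decomp r e w (e none)).mpr ⟨rfl, hw⟩)]
      rw [Nat.choose_eq_zero_of_lt (by omega)]
      simp
  · rw [if_neg hw]
    apply Finset.sum_eq_zero
    intro k _
    rw [if_neg]
    intro hc
    exact hw ((exp_decomp r e w k).mp hc).2

end S4d

/-- blocks of repeated entries -/
def blocks (f : ℕ → ℕ) (s n : ℕ) : List ℕ :=
  ((List.range' s n).map (fun y => List.replicate (f y) y)).flatten

section Blocks
variable (f : ℕ → ℕ)

lemma blocks_zero (s : ℕ) : blocks f s 0 = [] := rfl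

lemma blocks_succ (s n : ℕ) : blocks f s (n+1) = List.replicate (f s) s ++ blocks f (s+1) n := by
  rw [blocks, List.range'_succ, List.map_cons, List.flatten_cons]; rfl

lemma mem_blocks : ∀ (n s e : ℕ), e ∈ blocks f s n → s ≤ e ∧ e < s + n ∧ f e ≠ 0 := by
  intro n
  induction n with
  | zero => intro s e h; simp [blocks_zero] at h
  | succ n ih =>
    intro s e h
    rw [blocks_succ, List.mem_append] at h
    rcases h with h | h
    · rw [List.mem_replicate] at h
      obtain ⟨hf, rfl⟩ := h
      refine ⟨le_refl _, by omega, ?_⟩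
      intro h0; rw [h0] at hf; exact hf rfl
    · have := ih (s+1) e h
      exact ⟨by omega, by omega, this.2.2⟩

lemma count_blocks : ∀ (n s x : ℕ),
    (blocks f s n).count x = if s ≤ x ∧ x < s + n then f x else 0 := by
  intro n
  induction n with
  | zero =>
    intro s x
    rw [blocks_zero]
    simp only [List.count_nil]
    rw [if_neg (by omega)]
  | succ n ih =>
    intro s x
    rw [blocks_succ, List.count_append, ih (s+1) x, List.count_replicate]
    simp only [beq_iff_eq]
    by_cases hxs : s = x
    · subst hxs
      rw [if_pos rfl, if_neg (by omega), if_pos (by omega)]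
      omega
    · rw [if_neg hxs, zero_add]
      split_ifs <;> omega

lemma length_blocks : ∀ (n s : ℕ),
    (blocks f s n).length = ∑ y ∈ Finset.Ico s (s+n), f y := by
  intro n
  induction n with
  | zero => intro s; rw [blocks_zero]; simp
  | succ n ih =>
    intro s
    rw [blocks_succ, List.length_append, List.length_replicate, ih (s+1)]
    rw [Finset.sum_eq_sum_Ico_succ_bot (a := s) (b := s + (n+1)) (by omega) f]
    rw [show s + 1 + n = s + (n+1) by omega]

lemma pairwise_blocks : ∀ (n s : ℕ), (blocks f s n).Pairwise (· ≤ ·) := by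
  intro n
  induction n with
  | zero => intro s; rw [blocks_zero]; exact List.Pairwise.nil
  | succ n ih =>
    intro s
    rw [blocks_succ, List.pairwise_append]
    refine ⟨List.pairwise_replicate.mpr (Or.inr (le_refl s)), ih (s+1), ?_⟩
    intro a ha b hb
    rw [List.mem_replicate] at ha
    have := mem_blocks f n (s+1) b hb
    omega

end Blocks

section S4e
variable (r : ℕ)

/-- the multiplicity data of row `i`, extracted from a Kostant partition datum -/
def LL (r : ℕ) (c : Fin r × Fin r → ℕ) (i : Fin r) (x : ℕ) : ℕ :=
  if h1 : i.1 + 2 ≤ x ∧ x ≤ r then c (i, ⟨x - 2, by omega⟩)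
  else if x = r + 1 then c (i, ⟨r - 1, by have := i.2; omega⟩) % 2
  else if x = 2*r + 1 - i.1 then c (i, ⟨r - 1, by have := i.2; omega⟩) / 2
  else if h2 : r + 2 ≤ x ∧ x ≤ 2*r - i.1 then c (⟨2*r + 1 - x, by omega⟩, i)
  else 0

lemma LL_mid (c : Fin r × Fin r → ℕ) (i : Fin r) (x : ℕ) (h1 : i.1 + 2 ≤ x) (h2 : x ≤ r) :
    LL r c i x = c (i, ⟨x - 2, by omega⟩) := by
  rw [LL, dif_pos ⟨h1, h2⟩]

lemma LL_zero (c : Fin r × Fin r → ℕ) (i : Fin r) :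
    LL r c i (r+1) = c (i, ⟨r - 1, by have := i.2; omega⟩) % 2 := by
  rw [LL, dif_neg (by omega), if_pos rfl]

lemma LL_bar1 (c : Fin r × Fin r → ℕ) (i : Fin r) :
    LL r c i (2*r+1-i.1) = c (i, ⟨r - 1, by have := i.2; omega⟩) / 2 := by
  have hi := i.2
  rw [LL, dif_neg (by omega), if_neg (by omega), if_pos rfl]

lemma LL_barmid (c : Fin r × Fin r → ℕ) (i : Fin r) (x : ℕ) (h1 : r + 2 ≤ x) (h2 : x ≤ 2*r - i.1) :
    LL r c i x = c (⟨2*r + 1 - x, by omega⟩, i) := by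
  have hi := i.2
  rw [LL, dif_neg (by omega), if_neg (by omega), if_neg (by omega), dif_pos ⟨h1, h2⟩]

lemma LL_out (c : Fin r × Fin r → ℕ) (i : Fin r) (x : ℕ) (h : x < i.1 + 2 ∨ 2*r + 1 - i.1 < x) :
    LL r c i x = 0 := by
  have hi := i.2
  rw [LL, dif_neg (by omega), if_neg (by omega), if_neg (by omega), dif_neg (by omega)]

/-- total extra entries in row `i` -/
def tlB (r : ℕ) (c : Fin r × Fin r → ℕ) (i : ℕ) : ℕ :=
  if h : i < r then ∑ x ∈ Finset.Icc (i+2) (2*r+1-i), LL r c ⟨i, h⟩ x else 0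

/-- length of row `i` (`i = r` gives `0`) -/
def lenB (r : ℕ) (c : Fin r × Fin r → ℕ) (i : ℕ) : ℕ :=
  (r - i) + ∑ j ∈ Finset.Ico i r, tlB r c j

lemma lenB_top (c : Fin r × Fin r → ℕ) : lenB r c r = 0 := by
  rw [lenB]; simp

lemma lenB_succ (c : Fin r × Fin r → ℕ) (i : ℕ) (h : i < r) :
    lenB r c i = lenB r c (i+1) + 1 + tlB r c i := by
  rw [lenB, lenB, Finset.sum_eq_sum_Ico_succ_bot h]
  omega

/-- row `i` of the tableau associated to a Kostant partition datum -/
def rowB (r : ℕ) (c : Fin r × Fin r → ℕ) (i : Fin r) : List ℕ :=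
  List.replicate (lenB r c (i.1+1) + 1) (i.1+1) ++ blocks (LL r c i) (i.1+2) (2*r - 2*i.1)

lemma count_rowB (c : Fin r × Fin r → ℕ) (i : Fin r) (x : ℕ) :
    (rowB r c i).count x =
      if x = i.1+1 then lenB r c (i.1+1) + 1 else LL r c i x := by
  have hi := i.2
  rw [rowB, List.count_append, List.count_replicate, count_blocks]
  simp only [beq_iff_eq]
  by_cases hx : x = i.1 + 1
  · rw [if_pos (by omega), if_pos hx, if_neg (by omega)]
  · rw [if_neg (by omega), if_neg hx, zero_add]
    by_cases hin : i.1 + 2 ≤ x ∧ x < i.1 + 2 + (2*r - 2*i.1)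
    · rw [if_pos hin]
    · rw [if_neg hin, LL_out r c i x (by omega)]

lemma mem_rowB (c : Fin r × Fin r → ℕ) (i : Fin r) (e : ℕ) (he : e ∈ rowB r c i) :
    i.1 + 1 ≤ e ∧ e ≤ 2*r + 1 - i.1 := by
  have hi := i.2
  rw [rowB, List.mem_append] at he
  rcases he with he | he
  · rw [List.mem_replicate] at he; omega
  · have := mem_blocks _ _ _ _ he; omega

lemma length_rowB (c : Fin r × Fin r → ℕ) (i : Fin r) :
    (rowB r c i).length = lenB r c i.1 := by
  have hi := i.2
  rw [rowB, List.length_append, List.length_replicate, length_blocks,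
    lenB_succ r c i.1 hi, tlB, dif_pos hi]
  rw [show i.1+2+(2*r-2*i.1) = (2*r+1-i.1)+1 by omega, Finset.Ico_add_one_right_eq_Icc]

lemma pairwise_rowB (c : Fin r × Fin r → ℕ) (i : Fin r) :
    (rowB r c i).Pairwise (· ≤ ·) := by
  rw [rowB, List.pairwise_append]
  refine ⟨List.pairwise_replicate.mpr (Or.inr (le_refl _)), pairwise_blocks _ _ _, ?_⟩
  intro a ha b hb
  rw [List.mem_replicate] at ha
  have := mem_blocks _ _ _ _ hb
  omega

end S4e

structure TabB (r : ℕ) where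
  row : Fin r → List ℕ
  entry_mem : ∀ i : Fin r, ∀ e ∈ row i, 1 ≤ e ∧ e ≤ 2 * r + 1
  row_weak : ∀ i : Fin r, (row i).Chain' (· ≤ ·)
  first_col : ∀ i : Fin r, (row i).head? = some (i.1 + 1)
  row_bound : ∀ i : Fin r, ∀ e ∈ row i, e ≤ 2 * r + 1 - i.1
  zero_once : ∀ i : Fin r, (row i).count (r + 1) ≤ 1
  col_le : ∀ i : Fin r, ∀ h : i.1 + 1 < r,
    (row ⟨i.1 + 1, h⟩).length ≤ (row i).length
  col_strict : ∀ i : Fin r, ∀ h : i.1 + 1 < r, ∀ j < (row ⟨i.1 + 1, h⟩).length,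
    (row i).getD j 0 < (row ⟨i.1 + 1, h⟩).getD j 0
  marg_large : ∀ i : Fin r, (row i).count (i.1 + 1) =
    (if h : i.1 + 1 < r then (row ⟨i.1 + 1, h⟩).length else 0) + 1

def ellB (r : ℕ) (T : TabB r) (i : Fin r) (x : ℕ) : ℕ := (T.row i).count x

def segB' (r : ℕ) (T : TabB r) : ℕ :=
  ∑ i : Fin r, ((Finset.Icc (i.1 + 2) (2 * r + 1)).filter fun x => ellB r T i x ≠ 0).card

def eB (r : ℕ) (T : TabB r) : ℕ :=
  (Finset.univ.filter fun i : Fin r =>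
    ellB r T i (r + 1) ≠ 0 ∧ ellB r T i (2 * r + 1 - i.1) ≠ 0).card

def segB (r : ℕ) (T : TabB r) : ℕ := segB' r T - eB r T

def XiB (r : ℕ) (T : TabB r) (v : Fin r → ℕ) : ℕ :=
  ∑ i : Fin r,
    ((∑ k ∈ Finset.Icc (i.1 + 2) r,
        if v = betaB r (i.1 + 1) (k - 1) then ellB r T i k else 0) +
      (if v = betaB r (i.1 + 1) r then
        2 * ellB r T i (2 * r + 1 - i.1) + ellB r T i (r + 1) else 0) +
      (∑ k ∈ Finset.Icc (i.1 + 2) r,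
        if v = gammaB r (i.1 + 1) k then ellB r T i (2 * r + 2 - k) else 0))

def negwtB (r : ℕ) (T : TabB r) : Fin r → ℕ :=
  ∑ v ∈ posRootsB r, XiB r T v • v

section S4f
variable (r : ℕ)

lemma TabB.ext' (T T' : TabB r) (h : T.row = T'.row) : T = T' := by
  cases T; cases T'; simpa using h

/-- the tableau associated to a Kostant partition datum -/
def toTab (r : ℕ) (c : Fin r × Fin r → ℕ) : TabB r where
  row := rowB r c
  entry_mem := by
    intro i e he
    have := mem_rowB r c i e he
    have := i.2
    omega
  row_weak := by
    intro i
    exact List.isChain_iff_pairwise.mpr (pairwise_rowB r c i)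
  first_col := by
    intro i
    rw [rowB, List.replicate_succ, List.cons_append, List.head?_cons]
  row_bound := by
    intro i e he
    exact (mem_rowB r c i e he).2
  zero_once := by
    intro i
    have h := count_rowB r c i (r+1)
    have hi := i.2
    rw [if_neg (by omega)] at h
    rw [show ((rowB r c i).count (r+1) : ℕ) = LL r c i (r+1) from h, LL_zero]
    omega
  col_le := by
    intro i h
    rw [length_rowB, length_rowB]
    simp only
    rw [lenB_succ r c i.1 i.2]
    omega
  col_strict := by
    intro i h j hj
    rw [length_rowB] at hj
    simp only at hj ⊢
    have h1 : (rowB r c i).getD j 0 = i.1 + 1 := by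
      rw [rowB, List.getD_append _ _ _ j (by rw [List.length_replicate]; omega)]
      rw [List.getD_eq_getElem _ _ (by rw [List.length_replicate]; omega)]
      exact List.getElem_replicate _
    have h2 : i.1 + 2 ≤ (rowB r c ⟨i.1+1, h⟩).getD j 0 := by
      have hl : j < (rowB r c ⟨i.1+1, h⟩).length := by rw [length_rowB]; exact hj
      rw [List.getD_eq_getElem _ _ hl]
      have hm := List.getElem_mem hl
      have := mem_rowB r c ⟨i.1+1, h⟩ _ hm
      simp only at this
      omega
    omega
  marg_large := by
    intro i
    have h := count_rowB r c i (i.1+1)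
    rw [if_pos rfl] at h
    rw [h]
    split
    · rename_i hlt
      rw [length_rowB]
    · rename_i hlt
      have : i.1 + 1 = r := by have := i.2; omega
      rw [this, lenB_top]

lemma ellB_toTab (c : Fin r × Fin r → ℕ) (i : Fin r) (x : ℕ) :
    ellB r (toTab r c) i x = if x = i.1+1 then lenB r c (i.1+1) + 1 else LL r c i x :=
  count_rowB r c i x

/-- extraction of the Kostant partition datum from a tableau -/
def dataOf (r : ℕ) (T : TabB r) (p : Fin r × Fin r) : ℕ :=
  if p.1 ≤ p.2 then
    (if p.2.1 = r - 1 then 2 * ellB r T p.1 (2*r+1-p.1.1) + ellB r T p.1 (r+1)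
     else ellB r T p.1 (p.2.1+2))
  else ellB r T p.2 (2*r+1-p.1.1)

lemma dataOf_toTab (c : Fin r × Fin r → ℕ) (p : Fin r × Fin r) :
    dataOf r (toTab r c) p = c p := by
  have h1 := p.1.2
  have h2 := p.2.2
  rcases le_or_gt p.1 p.2 with hle | hlt
  · rw [dataOf, if_pos hle]
    rw [Fin.le_def] at hle
    by_cases hr1 : p.2.1 = r - 1
    · rw [if_pos hr1]
      rw [ellB_toTab, ellB_toTab, if_neg (by omega), if_neg (by omega)]
      rw [LL_bar1, LL_zero]
      have hp : (p.1, (⟨r - 1, by omega⟩ : Fin r)) = p :=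
        Prod.ext_iff.mpr ⟨rfl, Fin.ext (by simp [hr1.symm])⟩
      rw [hp]
      omega
    · rw [if_neg hr1]
      rw [ellB_toTab, if_neg (by omega)]
      rw [LL_mid r c p.1 (p.2.1+2) (by omega) (by omega)]
      exact congrArg c (Prod.ext_iff.mpr ⟨rfl, Fin.ext (by simp)⟩)
  · rw [dataOf, if_neg (not_le.mpr hlt)]
    rw [Fin.lt_def] at hlt
    rw [ellB_toTab, if_neg (by omega)]
    rw [LL_barmid r c p.2 (2*r+1-p.1.1) (by omega) (by omega)]
    exact congrArg c (Prod.ext_iff.mpr ⟨Fin.ext (by simp; omega), rfl⟩)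

end S4f

section S4g
variable (r : ℕ)

lemma row_sorted (T : TabB r) (i : Fin r) : (T.row i).Pairwise (· ≤ ·) :=
  List.isChain_iff_pairwise.mp (T.row_weak i)

lemma row_ge (T : TabB r) (i : Fin r) : ∀ e ∈ T.row i, i.1 + 1 ≤ e := by
  cases h : T.row i with
  | nil => intro e he; simp at he
  | cons a l =>
    have hh := T.first_col i
    rw [h, List.head?_cons, Option.some_inj] at hh
    have hp := row_sorted r T i
    rw [h, List.pairwise_cons] at hp
    intro e he
    rw [List.mem_cons] at he
    rcases he with rfl | he
    · omega
    · have := hp.1 e he; omega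

lemma count_eq (T : TabB r) (i : Fin r) (x : ℕ) (hx : x ≠ i.1 + 1) :
    (T.row i).count x = LL r (dataOf r T) i x := by
  have hi := i.2
  have hnotmem_low : x < i.1 + 1 → (T.row i).count x = 0 := by
    intro h
    rw [List.count_eq_zero]
    intro hm
    have := row_ge r T i x hm; omega
  have hnotmem_high : 2*r + 1 - i.1 < x → (T.row i).count x = 0 := by
    intro h
    rw [List.count_eq_zero]
    intro hm
    have := T.row_bound i x hm; omega
  have h0 : ellB r T i (r+1) ≤ 1 := T.zero_once i
  rcases lt_or_ge x (i.1+2) with h1 | h1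
  · rw [LL_out _ _ _ _ (Or.inl h1), hnotmem_low (by omega)]
  rcases le_or_gt x r with h2 | h2
  · rw [LL_mid r _ i x h1 h2, dataOf, if_pos (by rw [Fin.le_def]; simp; omega),
      if_neg (by simp; omega)]
    show _ = ellB r T i (x - 2 + 2)
    rw [show x - 2 + 2 = x by omega]
    rfl
  by_cases h3 : x = r + 1
  · subst h3
    rw [LL_zero, dataOf, if_pos (by rw [Fin.le_def]; simp; omega), if_pos (by simp)]
    show (ellB r T i (r+1) : ℕ) = _
    dsimp only
    omega
  by_cases h4 : x = 2*r + 1 - i.1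
  · subst h4
    rw [LL_bar1, dataOf, if_pos (by rw [Fin.le_def]; simp; omega), if_pos (by simp)]
    show (ellB r T i (2*r+1-i.1) : ℕ) = _
    dsimp only
    omega
  rcases le_or_gt x (2*r - i.1) with h5 | h5
  · rw [LL_barmid r _ i x (by omega) h5, dataOf, if_neg (by rw [Fin.le_def]; simp; omega)]
    show _ = ellB r T i (2*r+1 - (2*r+1-x))
    rw [show 2*r+1 - (2*r+1-x) = x by omega]
    rfl
  · rw [LL_out _ _ _ _ (Or.inr (by omega)), hnotmem_high (by omega)]

lemma length_count (b : ℕ) : ∀ (l : List ℕ), (∀ e ∈ l, e < b) →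
    l.length = ∑ x ∈ Finset.range b, l.count x := by
  intro l
  induction l with
  | nil => intro _; simp
  | cons a l ih =>
    intro h
    have ha : a ∈ Finset.range b := Finset.mem_range.mpr (h a (List.mem_cons_self))
    simp only [List.count_cons, List.length_cons, beq_iff_eq]
    rw [Finset.sum_add_distrib, ← ih (fun e he => h e (List.mem_cons_of_mem a he))]
    rw [Finset.sum_ite_eq (Finset.range b) a (fun _ => 1), if_pos ha]

lemma len_eq (T : TabB r) : ∀ (k : ℕ) (i : Fin r), r - i.1 ≤ k →
    (T.row i).length = lenB r (dataOf r T) i.1 := by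
  intro k
  induction k with
  | zero => intro i h; have := i.2; omega
  | succ k ih =>
    intro i hk
    have hi := i.2
    have hmem : ∀ e ∈ T.row i, e < 2*r + 2 := by
      intro e he
      have := T.entry_mem i e he; omega
    rw [length_count (2*r+2) (T.row i) hmem]
    have hsplit := Finset.sum_eq_add_sum_sdiff_singleton_of_mem
      (show i.1+1 ∈ Finset.range (2*r+2) from Finset.mem_range.mpr (by omega))
      (fun x => (T.row i).count x)
    rw [hsplit]
    have hrest : ∑ x ∈ Finset.range (2*r+2) \ {i.1+1}, (T.row i).count x
        = ∑ x ∈ Finset.Icc (i.1+2) (2*r+1-i.1), LL r (dataOf r T) i x := by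
      rw [Finset.sum_congr rfl (fun x hxm => by
        simp only [Finset.mem_sdiff, Finset.mem_singleton] at hxm
        exact count_eq r T i x hxm.2)]
      symm
      apply Finset.sum_subset
      · intro x hxm
        simp only [Finset.mem_Icc] at hxm
        simp only [Finset.mem_sdiff, Finset.mem_singleton, Finset.mem_range]
        omega
      · intro x _ hxm
        simp only [Finset.mem_Icc] at hxm
        exact LL_out r _ i x (by omega)
    rw [hrest]
    have hmarg := T.marg_large i
    have hcnt : (T.row i).count (i.1+1) = lenB r (dataOf r T) (i.1+1) + 1 := by
      rw [hmarg]
      split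
      · rename_i hlt
        rw [ih ⟨i.1+1, hlt⟩ (by simp; omega)]
      · rename_i hlt
        rw [show i.1 + 1 = r by omega, lenB_top]
    rw [hcnt, lenB_succ r _ i.1 hi, tlB, dif_pos hi]

lemma row_eq (T : TabB r) (i : Fin r) : T.row i = rowB r (dataOf r T) i := by
  refine (fun (hp : (T.row i).Perm (rowB r (dataOf r T) i)) h1 h2 =>
    List.Perm.eq_of_pairwise' (r := (· ≤ · : ℕ → ℕ → Prop)) h1 h2 hp) ?_ ?_ ?_
  · rw [List.perm_iff_count]
    intro x
    rw [count_rowB]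
    by_cases hx : x = i.1 + 1
    · subst hx
      rw [if_pos rfl, T.marg_large i]
      split
      · rename_i hlt
        rw [len_eq r T (r - (i.1+1)) ⟨i.1+1, hlt⟩ (by simp)]
      · rename_i hlt
        have hi := i.2
        rw [show i.1 + 1 = r by omega, lenB_top]
    · rw [if_neg hx]
      exact count_eq r T i x hx
  · exact row_sorted r T i
  · exact pairwise_rowB r _ i

lemma toTab_dataOf (T : TabB r) : toTab r (dataOf r T) = T :=
  (TabB.ext' r _ _ (funext fun i => (row_eq r T i))).symm

end S4g

section S4h
variable (r : ℕ)

lemma rootOf_beta (p : Fin r × Fin r) (h : p.1 ≤ p.2) :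
    rootOf r p = betaB r (p.1.1+1) (p.2.1+1) := if_pos h

lemma rootOf_gamma (p : Fin r × Fin r) (h : ¬ p.1 ≤ p.2) :
    rootOf r p = gammaB r (p.2.1+1) (p.1.1+1) := if_neg h

lemma XiB_rootOf (hr : 1 ≤ r) (T : TabB r) (p : Fin r × Fin r) :
    XiB r T (rootOf r p) = dataOf r T p := by
  have hp1 := p.1.2
  have hp2 := p.2.2
  rcases le_or_gt p.1 p.2 with hle | hlt
  · have hle' : p.1.1 ≤ p.2.1 := hle
    have hS3 : ∀ i' : Fin r, (∑ k ∈ Finset.Icc (i'.1 + 2) r,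
        if rootOf r p = gammaB r (i'.1 + 1) k then ellB r T i' (2 * r + 2 - k) else 0) = 0 := by
      intro i'
      apply Finset.sum_eq_zero
      intro k hk
      rw [Finset.mem_Icc] at hk
      rw [if_neg]
      intro hc
      rw [rootOf_beta r p hle] at hc
      exact beta_ne_gamma r hr (by omega) (by omega) (by omega) hc
    by_cases hB : p.2.1 + 1 = r
    · -- β_{i,r} case
      have hS1 : ∀ i' : Fin r, (∑ k ∈ Finset.Icc (i'.1 + 2) r,
          if rootOf r p = betaB r (i'.1 + 1) (k - 1) then ellB r T i' k else 0) = 0 := by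
        intro i'
        apply Finset.sum_eq_zero
        intro k hk
        rw [Finset.mem_Icc] at hk
        rw [if_neg]
        intro hc
        rw [rootOf_beta r p hle] at hc
        have := beta_inj r (by omega) (by omega) (by omega) (by omega) (by omega) (by omega) hc
        omega
      rw [XiB]
      rw [Finset.sum_congr rfl (fun i' _ => by rw [hS1, hS3, zero_add, add_zero])]
      rw [Finset.sum_eq_single_of_mem p.1 (Finset.mem_univ _)]
      · rw [if_pos (by rw [rootOf_beta r p hle, hB])]
        rw [dataOf, if_pos hle, if_pos (by omega)]
      · intro i' _ hne
        rw [if_neg]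
        intro hc
        rw [rootOf_beta r p hle] at hc
        have := beta_inj r (by omega) (by omega) (by omega) (by omega) (by omega) (by omega) hc
        exact hne (Fin.ext (by omega))
    · -- β_{i,k} case, k < r
      have hS2 : ∀ i' : Fin r, (if rootOf r p = betaB r (i'.1 + 1) r then
          2 * ellB r T i' (2 * r + 1 - i'.1) + ellB r T i' (r + 1) else 0) = 0 := by
        intro i'
        rw [if_neg]
        intro hc
        rw [rootOf_beta r p hle] at hc
        have := beta_inj r (by omega) (by omega) (by omega) (by omega) (by omega) (by omega) hc
        omega
      rw [XiB]
      rw [Finset.sum_congr rfl (fun i' _ => by rw [hS2, hS3, add_zero, add_zero])]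
      rw [Finset.sum_eq_single_of_mem p.1 (Finset.mem_univ _)]
      · rw [Finset.sum_eq_single_of_mem (p.2.1 + 2)
          (Finset.mem_Icc.mpr ⟨by omega, by omega⟩)]
        · rw [if_pos (by rw [rootOf_beta r p hle, show p.2.1 + 2 - 1 = p.2.1 + 1 by omega])]
          rw [dataOf, if_pos hle, if_neg (by omega)]
        · intro k hk hkne
          rw [Finset.mem_Icc] at hk
          rw [if_neg]
          intro hc
          rw [rootOf_beta r p hle] at hc
          have := beta_inj r (by omega) (by omega) (by omega) (by omega) (by omega) (by omega) hc
          omega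
      · intro i' _ hne
        apply Finset.sum_eq_zero
        intro k hk
        rw [Finset.mem_Icc] at hk
        rw [if_neg]
        intro hc
        rw [rootOf_beta r p hle] at hc
        have := beta_inj r (by omega) (by omega) (by omega) (by omega) (by omega) (by omega) hc
        exact hne (Fin.ext (by omega))
  · -- γ case
    have hle : ¬ p.1 ≤ p.2 := not_le.mpr hlt
    have hlt' : p.2.1 < p.1.1 := hlt
    have hS1 : ∀ i' : Fin r, (∑ k ∈ Finset.Icc (i'.1 + 2) r,
        if rootOf r p = betaB r (i'.1 + 1) (k - 1) then ellB r T i' k else 0) = 0 := by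
      intro i'
      apply Finset.sum_eq_zero
      intro k hk
      rw [Finset.mem_Icc] at hk
      rw [if_neg]
      intro hc
      rw [rootOf_gamma r p hle] at hc
      exact beta_ne_gamma r hr (by omega) (by omega) (by omega) hc.symm
    have hS2 : ∀ i' : Fin r, (if rootOf r p = betaB r (i'.1 + 1) r then
        2 * ellB r T i' (2 * r + 1 - i'.1) + ellB r T i' (r + 1) else 0) = 0 := by
      intro i'
      rw [if_neg]
      intro hc
      rw [rootOf_gamma r p hle] at hc
      exact beta_ne_gamma r hr (by omega) (by omega) (by omega) hc.symm
    rw [XiB]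
    rw [Finset.sum_congr rfl (fun i' _ => by rw [hS1, hS2, zero_add, zero_add])]
    rw [Finset.sum_eq_single_of_mem p.2 (Finset.mem_univ _)]
    · rw [Finset.sum_eq_single_of_mem (p.1.1 + 1)
        (Finset.mem_Icc.mpr ⟨by omega, by omega⟩)]
      · rw [if_pos (by rw [rootOf_gamma r p hle])]
        rw [show 2 * r + 2 - (p.1.1 + 1) = 2 * r + 1 - p.1.1 by omega]
        rw [dataOf, if_neg hle]
      · intro k hk hkne
        rw [Finset.mem_Icc] at hk
        rw [if_neg]
        intro hc
        rw [rootOf_gamma r p hle] at hc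
        have := gamma_inj r (by omega) (by omega) (by omega) (by omega) (by omega) (by omega) hc
        omega
    · intro i' _ hne
      apply Finset.sum_eq_zero
      intro k hk
      rw [Finset.mem_Icc] at hk
      rw [if_neg]
      intro hc
      rw [rootOf_gamma r p hle] at hc
      have := gamma_inj r (by omega) (by omega) (by omega) (by omega) (by omega) (by omega) hc
      exact hne (Fin.ext (by omega))

lemma negwtB_eq (hr : 1 ≤ r) (T : TabB r) :
    negwtB r T = ∑ p : Fin r × Fin r, dataOf r T p • rootOf r p := by
  rw [negwtB, posRootsB_eq r hr,
    Finset.sum_image (fun p _ q _ h => rootOf_inj r hr h)]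
  exact Finset.sum_congr rfl (fun p _ => by rw [XiB_rootOf r hr T p])

end S4h

section S4i
variable (r : ℕ)

lemma ellB_high (T : TabB r) (i : Fin r) (x : ℕ) (h : 2*r + 1 - i.1 < x) :
    ellB r T i x = 0 :=
  List.count_eq_zero.mpr (fun hm => absurd (T.row_bound i x hm) (by omega))

/-- the row of a pair -/
def rowOfP (r : ℕ) (p : Fin r × Fin r) : Fin r := if p.1 ≤ p.2 then p.1 else p.2

/-- indicator of a nonzero entry count -/
def fI (r : ℕ) (T : TabB r) (i : Fin r) (x : ℕ) : ℕ := if ellB r T i x ≠ 0 then 1 else 0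

/-- β-indicator reindexed over ℕ -/
lemma Ico_pred_singleton {a b : ℕ} (h : b = a+1) : Finset.Ico a b = {a} := by
  rw [h, Nat.Ico_succ_singleton]

def Fb (r : ℕ) (T : TabB r) (i : Fin r) : ℕ → ℕ := fun j =>
  if h : j < r then (if i.1 ≤ j ∧ dataOf r T (i, ⟨j,h⟩) ≠ 0 then 1 else 0) else 0

/-- γ-indicator reindexed over ℕ -/
def Fg (r : ℕ) (T : TabB r) (i : Fin r) : ℕ → ℕ := fun j =>
  if h : j < r then (if i.1 < j ∧ dataOf r T (⟨j,h⟩, i) ≠ 0 then 1 else 0) else 0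

lemma seg_row (hr : 1 ≤ r) (T : TabB r) (i : Fin r) :
    ((Finset.Icc (i.1 + 2) (2 * r + 1)).filter fun x => ellB r T i x ≠ 0).card
      = ((Finset.univ : Finset (Fin r × Fin r)).filter fun p =>
            rowOfP r p = i ∧ dataOf r T p ≠ 0).card
        + (if ellB r T i (r + 1) ≠ 0 ∧ ellB r T i (2 * r + 1 - i.1) ≠ 0 then 1 else 0) := by
  classical
  have hi := i.2
  -- LHS computation
  have hL : ((Finset.Icc (i.1 + 2) (2 * r + 1)).filter fun x => ellB r T i x ≠ 0).card
      = (∑ x ∈ Finset.Ico (i.1+2) (r+1), fI r T i x) + (∑ x ∈ Finset.Ico (r+2) (2*r+1-i.1), fI r T i x)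
        + fI r T i (r+1) + fI r T i (2*r+1-i.1) := by
    rw [Finset.card_filter]
    rw [show Finset.Icc (i.1+2) (2*r+1) = Finset.Ico (i.1+2) (2*r+2) by
      rw [← Finset.Ico_add_one_right_eq_Icc]; rfl]
    rw [show (∑ x ∈ Finset.Ico (i.1+2) (2*r+2), if ellB r T i x ≠ 0 then 1 else 0)
        = ∑ x ∈ Finset.Ico (i.1+2) (2*r+2), fI r T i x from rfl]
    rw [← Finset.sum_Ico_consecutive (fI r T i) (show i.1+2 ≤ r+1 by omega)
      (show r+1 ≤ 2*r+2 by omega)]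
    rw [← Finset.sum_Ico_consecutive (fI r T i) (show r+1 ≤ r+2 by omega)
      (show r+2 ≤ 2*r+2 by omega)]
    rw [← Finset.sum_Ico_consecutive (fI r T i) (show r+2 ≤ 2*r+1-i.1 by omega)
      (show 2*r+1-i.1 ≤ 2*r+2 by omega)]
    rw [← Finset.sum_Ico_consecutive (fI r T i) (show 2*r+1-i.1 ≤ 2*r+2-i.1 by omega)
      (show 2*r+2-i.1 ≤ 2*r+2 by omega)]
    rw [Nat.Ico_succ_singleton, Finset.sum_singleton]
    rw [show Finset.Ico (2*r+1-i.1) (2*r+2-i.1) = {2*r+1-i.1} by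
      rw [show 2*r+2-i.1 = (2*r+1-i.1)+1 by omega, Nat.Ico_succ_singleton]]
    rw [Finset.sum_singleton]
    have hz : ∑ x ∈ Finset.Ico (2*r+2-i.1) (2*r+2), fI r T i x = 0 := by
      apply Finset.sum_eq_zero
      intro x hx
      rw [Finset.mem_Ico] at hx
      have hzz : ellB r T i x = 0 := ellB_high r T i x (by omega)
      rw [fI, if_neg (by omega)]
    rw [hz]
    ring
  -- RHS pair-sum computation
  have hR : ((Finset.univ : Finset (Fin r × Fin r)).filter fun p =>
        rowOfP r p = i ∧ dataOf r T p ≠ 0).card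
      = (∑ x ∈ Finset.Ico (i.1+2) (r+1), fI r T i x) + (∑ x ∈ Finset.Ico (r+2) (2*r+1-i.1), fI r T i x)
        + (if ellB r T i (r+1) ≠ 0 ∨ ellB r T i (2*r+1-i.1) ≠ 0 then 1 else 0) := by
    rw [Finset.card_filter]
    rw [← Finset.univ_product_univ, Finset.sum_product]
    have hsplit : ∀ a b : Fin r,
        (if rowOfP r (a,b) = i ∧ dataOf r T (a,b) ≠ 0 then (1:ℕ) else 0)
          = (if a ≤ b ∧ a = i ∧ dataOf r T (a,b) ≠ 0 then 1 else 0)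
            + (if ¬ a ≤ b ∧ b = i ∧ dataOf r T (a,b) ≠ 0 then 1 else 0) := by
      intro a b
      by_cases hab : a ≤ b
      · simp [rowOfP, hab]
      · simp [rowOfP, hab]
    rw [Finset.sum_congr rfl (fun a _ => Finset.sum_congr rfl (fun b _ => hsplit a b))]
    rw [Finset.sum_congr rfl (fun a _ => Finset.sum_add_distrib), Finset.sum_add_distrib]
    have hbeta : ∑ a : Fin r, ∑ b : Fin r, (if a ≤ b ∧ a = i ∧ dataOf r T (a,b) ≠ 0 then (1:ℕ) else 0)
        = ∑ b : Fin r, (if i ≤ b ∧ dataOf r T (i,b) ≠ 0 then 1 else 0) := by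
      rw [Finset.sum_eq_single_of_mem i (Finset.mem_univ _)]
      · exact Finset.sum_congr rfl (fun b _ => by simp)
      · intro a _ hne
        apply Finset.sum_eq_zero
        intro b _
        rw [if_neg]
        rintro ⟨_, rfl, _⟩
        exact hne rfl
    have hgamma : ∑ a : Fin r, ∑ b : Fin r, (if ¬ a ≤ b ∧ b = i ∧ dataOf r T (a,b) ≠ 0 then (1:ℕ) else 0)
        = ∑ a : Fin r, (if ¬ a ≤ i ∧ dataOf r T (a,i) ≠ 0 then 1 else 0) := by
      apply Finset.sum_congr rfl
      intro a _
      rw [Finset.sum_eq_single_of_mem i (Finset.mem_univ _)]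
      · simp
      · intro b _ hne
        rw [if_neg]
        rintro ⟨_, rfl, _⟩
        exact hne rfl
    rw [hbeta, hgamma]
    -- convert Fin sums to ℕ sums
    have hbeta2 : ∑ b : Fin r, (if i ≤ b ∧ dataOf r T (i,b) ≠ 0 then (1:ℕ) else 0)
        = (∑ x ∈ Finset.Ico (i.1+2) (r+1), fI r T i x)
          + (if ellB r T i (r+1) ≠ 0 ∨ ellB r T i (2*r+1-i.1) ≠ 0 then 1 else 0) := by
      have hF : ∀ b : Fin r, (if i ≤ b ∧ dataOf r T (i,b) ≠ 0 then (1:ℕ) else 0)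
          = Fb r T i b.1 := by
        intro b
        simp only [Fb, dif_pos b.2, Fin.eta, Fin.le_def]
      rw [Finset.sum_congr rfl (fun b _ => hF b), Fin.sum_univ_eq_sum_range (Fb r T i) r]
      rw [Finset.range_eq_Ico]
      rw [← Finset.sum_Ico_consecutive (Fb r T i) (show 0 ≤ i.1 by omega) (show i.1 ≤ r by omega)]
      rw [← Finset.sum_Ico_consecutive (Fb r T i) (show i.1 ≤ r-1 by omega) (show r-1 ≤ r by omega)]
      have hz1 : ∑ j ∈ Finset.Ico 0 i.1, Fb r T i j = 0 := by
        apply Finset.sum_eq_zero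
        intro j hj
        rw [Finset.mem_Ico] at hj
        rw [Fb]
        rw [dif_pos (show j < r by omega)]
        rw [if_neg (by omega)]
      have hz3 : ∑ j ∈ Finset.Ico (r-1) r, Fb r T i j
          = (if ellB r T i (r+1) ≠ 0 ∨ ellB r T i (2*r+1-i.1) ≠ 0 then 1 else 0) := by
        rw [Ico_pred_singleton (show r = (r-1)+1 by omega)]
        rw [Finset.sum_singleton, Fb]
        rw [dif_pos (show r - 1 < r by omega)]
        have hd : dataOf r T (i, ⟨r-1, show r-1 < r by omega⟩)
            = 2 * ellB r T i (2*r+1-i.1) + ellB r T i (r+1) := by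
          rw [dataOf, if_pos (by rw [Fin.le_def]; simp; omega), if_pos (by simp)]
        rw [hd]
        split_ifs <;> omega
      have hz2 : ∑ j ∈ Finset.Ico i.1 (r-1), Fb r T i j
          = ∑ x ∈ Finset.Ico (i.1+2) (r+1), fI r T i x := by
        rw [Finset.sum_congr rfl (fun j hj => show Fb r T i j = fI r T i (j+2) from by
          rw [Finset.mem_Ico] at hj
          rw [Fb]
          rw [dif_pos (show j < r by omega)]
          have hd : dataOf r T (i, ⟨j, show j < r by omega⟩) = ellB r T i (j+2) := by
            rw [dataOf, if_pos (by rw [Fin.le_def]; simp; omega), if_neg (by simp; omega)]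
          rw [hd, fI]
          split_ifs <;> omega)]
        rw [Finset.sum_Ico_eq_sum_range, Finset.sum_Ico_eq_sum_range]
        rw [show r+1-(i.1+2) = r-1-i.1 by omega]
        apply Finset.sum_congr rfl
        intro k _
        congr 1
        omega
      rw [hz1, hz2, hz3, zero_add]
    have hgamma2 : ∑ a : Fin r, (if ¬ a ≤ i ∧ dataOf r T (a,i) ≠ 0 then (1:ℕ) else 0)
        = ∑ x ∈ Finset.Ico (r+2) (2*r+1-i.1), fI r T i x := by
      have hF : ∀ a : Fin r, (if ¬ a ≤ i ∧ dataOf r T (a,i) ≠ 0 then (1:ℕ) else 0)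
          = Fg r T i a.1 := by
        intro a
        simp only [Fg, dif_pos a.2, Fin.eta, not_le, Fin.lt_def]
      rw [Finset.sum_congr rfl (fun a _ => hF a), Fin.sum_univ_eq_sum_range (Fg r T i) r]
      rw [Finset.range_eq_Ico]
      rw [← Finset.sum_Ico_consecutive (Fg r T i) (show 0 ≤ i.1+1 by omega) (show i.1+1 ≤ r by omega)]
      have hz1 : ∑ j ∈ Finset.Ico 0 (i.1+1), Fg r T i j = 0 := by
        apply Finset.sum_eq_zero
        intro j hj
        rw [Finset.mem_Ico] at hj
        rw [Fg]
        rw [dif_pos (show j < r by omega)]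
        rw [if_neg (by omega)]
      have hz2 : ∑ j ∈ Finset.Ico (i.1+1) r, Fg r T i j
          = ∑ x ∈ Finset.Ico (r+2) (2*r+1-i.1), fI r T i x := by
        rw [Finset.sum_congr rfl (fun j hj => show Fg r T i j = fI r T i (2*r+1-j) from by
          rw [Finset.mem_Ico] at hj
          rw [Fg]
          rw [dif_pos (show j < r by omega)]
          have hd : dataOf r T (⟨j, show j < r by omega⟩, i) = ellB r T i (2*r+1-j) := by
            rw [dataOf, if_neg (by rw [Fin.le_def]; simp; omega)]
          rw [hd, fI]
          split_ifs <;> omega)]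
        rw [Finset.sum_Ico_eq_sum_range, Finset.sum_Ico_eq_sum_range]
        rw [show 2*r+1-i.1-(r+2) = r-(i.1+1) by omega]
        calc ∑ k ∈ Finset.range (r-(i.1+1)), fI r T i (2*r+1-(i.1+1+k))
            = ∑ k ∈ Finset.range (r-(i.1+1)), fI r T i (r+2+((r-(i.1+1))-1-k)) := by
              apply Finset.sum_congr rfl
              intro k hk
              rw [Finset.mem_range] at hk
              congr 1
              omega
          _ = ∑ k ∈ Finset.range (r-(i.1+1)), fI r T i (r+2+k) :=
              Finset.sum_range_reflect (fun k => fI r T i (r+2+k)) _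
      rw [hz1, hz2, zero_add]
    rw [hbeta2, hgamma2]
    ring
  rw [hL, hR, fI, fI]
  split_ifs <;> omega

end S4i

section S4j
variable (r : ℕ)

lemma seg_eq (hr : 1 ≤ r) (T : TabB r) : segB r T = Ncard r (dataOf r T) := by
  classical
  have hN : Ncard r (dataOf r T) = ∑ i : Fin r,
      ((Finset.univ : Finset (Fin r × Fin r)).filter fun p =>
        rowOfP r p = i ∧ dataOf r T p ≠ 0).card := by
    rw [Ncard]
    rw [Finset.card_eq_sum_card_fiberwise (f := rowOfP r) (t := (Finset.univ : Finset (Fin r)))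
      (fun p _ => Finset.mem_univ _)]
    apply Finset.sum_congr rfl
    intro i _
    rw [Finset.filter_filter]
    congr 1
    apply Finset.filter_congr
    intro p _
    exact ⟨fun h => ⟨h.2, h.1⟩, fun h => ⟨h.2, h.1⟩⟩
  have hE : eB r T = ∑ i : Fin r,
      (if ellB r T i (r+1) ≠ 0 ∧ ellB r T i (2*r+1-i.1) ≠ 0 then 1 else 0) :=
    Finset.card_filter _ _
  have hsum : segB' r T = Ncard r (dataOf r T) + eB r T := by
    rw [segB', hN, hE, ← Finset.sum_add_distrib]
    exact Finset.sum_congr rfl (fun i _ => seg_row r hr T i)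
  rw [segB, hsum]
  omega

end S4j

/-- the Gindikin–Karpelevich formula as a sum over the marginally
large tableaux `𝒯(∞)` of type `B_r`, stated coefficientwise in
`ℤ[[t, z_1, …, z_r]]`. -/
theorem stmt4 (r : ℕ) (hr : 2 ≤ r) :
    ∀ e : Option (Fin r) →₀ ℕ,
      MvPowerSeries.coeff (R := ℤ) e
        (∏ v ∈ posRootsB r, (1 - tvar r * zmon r v) *
          MvPowerSeries.invOfUnit (1 - zmon r v) 1)
      = ∑' T : TabB r,
          MvPowerSeries.coeff (R := ℤ) e
            ((1 - tvar r) ^ segB r T * zmon r (negwtB r T)) := by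
  classical
  intro e
  have hr1 : 1 ≤ r := by omega
  have hprod : (∏ v ∈ posRootsB r, (1 - tvar r * zmon r v) *
        MvPowerSeries.invOfUnit (1 - zmon r v) 1)
      = ∏ p : Fin r × Fin r, ((1 - tvar r * zmon r (rootOf r p)) * gB r (rootOf r p)) := by
    rw [posRootsB_eq r hr1, Finset.prod_image (fun p _ q _ h => rootOf_inj r hr1 h)]
    rfl
  rw [hprod, coeff_prod_reduction r hr1 e]
  set d := zdeg r e with hd
  set F := (Fintype.piFinset (fun _ : Fin r × Fin r => Finset.range (d+2))).image (toTab r)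
    with hF
  have hdataOf : ∀ T : TabB r, dataOf r (toTab r (dataOf r T)) = dataOf r T :=
    fun T => funext (dataOf_toTab r (dataOf r T))
  have hvanish : ∀ T : TabB r, T ∉ F →
      MvPowerSeries.coeff (R := ℤ) e ((1 - tvar r) ^ segB r T * zmon r (negwtB r T)) = 0 := by
    intro T hT
    by_cases hbound : ∀ p : Fin r × Fin r, dataOf r T p < d + 2
    · exfalso
      apply hT
      rw [hF, Finset.mem_image]
      refine ⟨dataOf r T, ?_, toTab_dataOf r T⟩
      rw [Fintype.mem_piFinset]
      intro p
      rw [Finset.mem_range]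
      exact hbound p
    · push_neg at hbound
      obtain ⟨q, hq⟩ := hbound
      rw [coeff_tz, if_neg]
      intro hcontra
      have h1 : ∑ j, negwtB r T j = ∑ j : Fin r, e (some j) :=
        Finset.sum_congr rfl (fun j _ => by rw [← hcontra])
      have h2 : d + 2 ≤ ∑ j, negwtB r T j := by
        have heq : ∑ j, negwtB r T j = ∑ p : Fin r × Fin r, dataOf r T p * ∑ j, rootOf r p j := by
          rw [negwtB_eq r hr1]
          rw [Finset.sum_congr rfl (fun j (_ : j ∈ Finset.univ) =>
            Finset.sum_apply j Finset.univ (fun p => dataOf r T p • rootOf r p))]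
          rw [Finset.sum_comm]
          exact Finset.sum_congr rfl (fun p _ => by rw [Finset.mul_sum]; rfl)
        rw [heq]
        calc d + 2 ≤ dataOf r T q * ∑ j, rootOf r q j := by
              have := rootOf_sum_pos r q
              calc d + 2 ≤ dataOf r T q * 1 := by omega
              _ ≤ dataOf r T q * ∑ j, rootOf r q j := Nat.mul_le_mul_left _ this
        _ ≤ ∑ p : Fin r × Fin r, dataOf r T p * ∑ j, rootOf r p j :=
              Finset.single_le_sum (f := fun p => dataOf r T p * ∑ j, rootOf r p j)
                (fun p _ => Nat.zero_le _) (Finset.mem_univ q)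
      have h3 : ∑ j : Fin r, e (some j) = d := rfl
      omega
  rw [tsum_eq_sum (s := F) hvanish]
  rw [hF, Finset.sum_image (fun c hc c' hc' hcc => by
    have h1 := funext (dataOf_toTab r c)
    have h2 := funext (dataOf_toTab r c')
    rw [← h1, ← h2, hcc])]
  apply Finset.sum_congr rfl
  intro c _
  have hdc : dataOf r (toTab r c) = c := funext (dataOf_toTab r c)
  rw [seg_eq r hr1 (toTab r c), negwtB_eq r hr1 (toTab r c), hdc]
end

section
/- In the formal power series ring ℤ[[t, z_1, …, z_r]], writing z^α = z_1^{m_1}⋯z_r^{m_r} for α = m_1α_1 + ⋯ + m_rα_r in the positive root lattice of D_r, one has ∏_{α ∈ Φ⁺(D_r)} (1 − t·z^{α})·(1 − z^{α})^{-1} = Σ_{T ∈ 𝒯(∞)} (1 − t)^{seg(T)} · z^{−wt(T)}, where Φ⁺(D_r) = {β_{i,k} : 1 ≤ i ≤ k ≤ r−1} ∪ {β_{i,r} : 1 ≤ i ≤ r−1} ∪ {γ_{i,k} : 1 ≤ i < k ≤ r−1} and the right-hand side is a well-defined formal power series because for each monomial only finitely many T ∈ 𝒯(∞) contribute. -/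
open MvPowerSeries

/-- The strict order on the type `D_r` alphabet
`{1 ≺ ⋯ ≺ r-1 ≺ r, r̄ ≺ \overline{r-1} ≺ ⋯ ≺ 1̄}`, encoded in `{1, …, 2r} ⊂ ℕ`
by `k ↦ k` for `k ≤ r`, `r̄ ↦ r+1`, and `k̄ ↦ 2r+1-k` for `k ≤ r-1`; the
symbols `r` and `r̄` (codes `r` and `r+1`) are incomparable. -/
def dltD (r : ℕ) (a b : ℕ) : Prop := a < b ∧ ¬(a = r ∧ b = r + 1)

/-- The weak order on the type `D_r` alphabet. -/
def dleD (r : ℕ) (a b : ℕ) : Prop := a = b ∨ dltD r a b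

/-- Marginally large semistandard Young tableaux of type `D_r`, on the
partially ordered alphabet above. Conditions: exactly `r-1` rows, rows weakly
increasing, columns strictly increasing, first column `1, …, r-1`, every entry
of row `i` is `≼ ī`, the symbols `r` and `r̄` never appear in the same row, and
the number of `i`-entries in row `i` exceeds the number of boxes in row `i+1`
by exactly one. -/
structure TabD (r : ℕ) where
  row : Fin (r - 1) → List ℕ
  entry_mem : ∀ i : Fin (r - 1), ∀ e ∈ row i, 1 ≤ e ∧ e ≤ 2 * r
  row_weak : ∀ i : Fin (r - 1), (row i).Chain' (dleD r)
  first_col : ∀ i : Fin (r - 1), (row i).head? = some (i.1 + 1)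
  row_bound : ∀ i : Fin (r - 1), ∀ e ∈ row i, dleD r e (2 * r - i.1)
  not_both : ∀ i : Fin (r - 1), ¬(r ∈ row i ∧ (r + 1) ∈ row i)
  col_le : ∀ i : Fin (r - 1), ∀ h : i.1 + 1 < r - 1,
    (row ⟨i.1 + 1, h⟩).length ≤ (row i).length
  col_strict : ∀ i : Fin (r - 1), ∀ h : i.1 + 1 < r - 1,
    ∀ j < (row ⟨i.1 + 1, h⟩).length,
      dltD r ((row i).getD j 0) ((row ⟨i.1 + 1, h⟩).getD j 0)
  marg_large : ∀ i : Fin (r - 1), (row i).count (i.1 + 1) =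
    (if h : i.1 + 1 < r - 1 then (row ⟨i.1 + 1, h⟩).length else 0) + 1

/-- `ℓ_{i,x}(T)`: the number of entries with code `x` in row `i` (row
`i : Fin (r-1)` has label `i+1`; `r̄` has code `r+1` and `k̄` has code `2r+1-k`
for `k ≤ r-1`). -/
def ellD (r : ℕ) (T : TabD r) (i : Fin (r - 1)) (x : ℕ) : ℕ := (T.row i).count x

/-- `seg′(T)`: the number of pairs `(i,x)` with `x ≻ i` and `ℓ_{i,x}(T) > 0`. -/
def segD' (r : ℕ) (T : TabD r) : ℕ :=
  ∑ i : Fin (r - 1),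
    ((Finset.Icc (i.1 + 2) (2 * r)).filter fun x => ellD r T i x ≠ 0).card

/-- `e_D(T)`: the number of rows `i` containing an `ī`-segment but neither an
`r`- nor an `r̄`-segment. -/
def eD (r : ℕ) (T : TabD r) : ℕ :=
  (Finset.univ.filter fun i : Fin (r - 1) =>
    ellD r T i (2 * r - i.1) ≠ 0 ∧ ellD r T i r = 0 ∧ ellD r T i (r + 1) = 0).card

/-- `seg(T) = seg′(T) + e_D(T)`. -/
def segD (r : ℕ) (T : TabD r) : ℕ := segD' r T + eD r T

/-- The positive root `β_{i,k} = α_i + ⋯ + α_k` of `D_r` (`1 ≤ i ≤ k ≤ r-1`),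
in simple-root coordinates. -/
def betaD (r : ℕ) (i k : ℕ) : Fin r → ℕ :=
  fun j => if i ≤ j.1 + 1 ∧ j.1 + 1 ≤ k then 1 else 0

/-- The positive root `β_{i,r} = α_i + ⋯ + α_{r-2} + α_r` of `D_r`
(`1 ≤ i ≤ r-1`), in simple-root coordinates. -/
def betaDr (r : ℕ) (i : ℕ) : Fin r → ℕ :=
  fun j => if i ≤ j.1 + 1 ∧ j.1 + 1 ≤ r - 2 then 1 else if j.1 + 1 = r then 1 else 0

/-- The positive root
`γ_{i,k} = α_i + ⋯ + α_{r-1} + α_r + α_{r-2} + ⋯ + α_k` of `D_r`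
(`1 ≤ i < k ≤ r-1`), in simple-root coordinates. -/
def gammaD (r : ℕ) (i k : ℕ) : Fin r → ℕ :=
  fun j => if i ≤ j.1 + 1 ∧ j.1 + 1 ≤ k - 1 then 1
    else if k ≤ j.1 + 1 ∧ j.1 + 1 ≤ r - 2 then 2
    else if j.1 + 1 = r - 1 ∨ j.1 + 1 = r then 1 else 0

/-- The set of positive roots of `D_r`. -/
def posRootsD (r : ℕ) : Finset (Fin r → ℕ) :=
  ((Finset.Icc 1 (r - 1) ×ˢ Finset.Icc 1 (r - 1)).filter fun p => p.1 ≤ p.2).image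
      (fun p => betaD r p.1 p.2) ∪
    (Finset.Icc 1 (r - 1)).image (fun i => betaDr r i) ∪
    ((Finset.Icc 1 (r - 1) ×ˢ Finset.Icc 1 (r - 1)).filter fun p => p.1 < p.2).image
      (fun p => gammaD r p.1 p.2)

/-- `Ξ(T)`, extended by zero to all vectors: `Ξ(T)(β_{i,k-1}) = ℓ_{i,k}(T)` for
`i < k ≤ r-1`, `Ξ(T)(β_{i,r-1}) = ℓ_{i,r}(T) + ℓ_{i,ī}(T)`,
`Ξ(T)(β_{i,r}) = ℓ_{i,r̄}(T) + ℓ_{i,ī}(T)`, and `Ξ(T)(γ_{i,k}) = ℓ_{i,k̄}(T)`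
for `i < k ≤ r-1`. -/
def XiD (r : ℕ) (T : TabD r) (v : Fin r → ℕ) : ℕ :=
  ∑ i : Fin (r - 1),
    ((∑ k ∈ Finset.Icc (i.1 + 2) (r - 1),
        if v = betaD r (i.1 + 1) (k - 1) then ellD r T i k else 0) +
      (if v = betaD r (i.1 + 1) (r - 1) then
        ellD r T i r + ellD r T i (2 * r - i.1) else 0) +
      (if v = betaDr r (i.1 + 1) then
        ellD r T i (r + 1) + ellD r T i (2 * r - i.1) else 0) +
      (∑ k ∈ Finset.Icc (i.1 + 2) (r - 1),
        if v = gammaD r (i.1 + 1) k then ellD r T i (2 * r + 1 - k) else 0))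

/-- `-wt(T) = Σ_α Ξ(T)(α)·α`, in simple-root coordinates. -/
def negwtD (r : ℕ) (T : TabD r) : Fin r → ℕ :=
  ∑ v ∈ posRootsD r, XiD r T v • v

namespace GK

variable {r : ℕ}

/-- exponent finsupp of `z^v` -/
noncomputable def dz (r : ℕ) (v : Fin r → ℕ) : Option (Fin r) →₀ ℕ :=
  Finsupp.equivFunOnFinite.symm fun o => Option.elim o 0 v

lemma zmon_eq (v : Fin r → ℕ) : zmon r v = monomial (R := ℤ) (dz r v) 1 := rfl

lemma dz_apply (v : Fin r → ℕ) (o : Option (Fin r)) :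
    dz r v o = Option.elim o 0 v := rfl

lemma dz_add (v w : Fin r → ℕ) : dz r (v + w) = dz r v + dz r w := by
  ext o; cases o <;> simp [dz_apply, dz]

lemma dz_zero : dz r 0 = 0 := by
  ext o; cases o <;> simp [dz_apply, dz]

/-- total degree of an exponent -/
def deg (e : Option (Fin r) →₀ ℕ) : ℕ := ∑ o : Option (Fin r), e o

lemma deg_add (a b : Option (Fin r) →₀ ℕ) : deg (a + b) = deg a + deg b := by
  simp [deg, Finset.sum_add_distrib]

lemma deg_mono {a b : Option (Fin r) →₀ ℕ} (h : a ≤ b) : deg a ≤ deg b :=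
  Finset.sum_le_sum fun o _ => h o

lemma deg_dz (v : Fin r → ℕ) : deg (dz r v) = ∑ j, v j := by
  classical
  simp [deg, dz_apply, Fintype.sum_option]

lemma zmon_mul (v w : Fin r → ℕ) : zmon r v * zmon r w = zmon r (v + w) := by
  rw [zmon_eq, zmon_eq, zmon_eq, dz_add, monomial_mul_monomial, one_mul]

lemma zmon_zero : zmon r 0 = 1 := by
  rw [zmon_eq, dz_zero]; exact rfl

lemma coeff_zmon (e : Option (Fin r) →₀ ℕ) (v : Fin r → ℕ) :
    coeff (R := ℤ) e (zmon r v) = if e = dz r v then 1 else 0 := by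
  classical
  rw [zmon_eq, coeff_monomial]

/-- congruence modulo total degree `> N` -/
def ModN (r N : ℕ) (X Y : MvPowerSeries (Option (Fin r)) ℤ) : Prop :=
  ∀ e : Option (Fin r) →₀ ℕ, deg e ≤ N → coeff (R := ℤ) e X = coeff (R := ℤ) e Y

lemma ModN.refl {N : ℕ} (X : MvPowerSeries (Option (Fin r)) ℤ) : ModN r N X X :=
  fun _ _ => rfl

lemma ModN.symm {N : ℕ} {X Y : MvPowerSeries (Option (Fin r)) ℤ}
    (h : ModN r N X Y) : ModN r N Y X := fun e he => (h e he).symm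

lemma ModN.trans {N : ℕ} {X Y Z : MvPowerSeries (Option (Fin r)) ℤ}
    (h : ModN r N X Y) (h' : ModN r N Y Z) : ModN r N X Z :=
  fun e he => (h e he).trans (h' e he)

lemma ModN.mul {N : ℕ} {X Y X' Y' : MvPowerSeries (Option (Fin r)) ℤ}
    (h : ModN r N X X') (h' : ModN r N Y Y') : ModN r N (X * Y) (X' * Y') := by
  classical
  intro e he
  rw [coeff_mul, coeff_mul]
  refine Finset.sum_congr rfl fun p hp => ?_
  rw [Finset.HasAntidiagonal.mem_antidiagonal] at hp
  have hd : deg p.1 + deg p.2 = deg e := by rw [← deg_add, hp]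
  rw [h p.1 (by omega), h' p.2 (by omega)]

lemma ModN.prod {N : ℕ} {ι : Type*} (s : Finset ι)
    (f g : ι → MvPowerSeries (Option (Fin r)) ℤ)
    (h : ∀ v ∈ s, ModN r N (f v) (g v)) :
    ModN r N (∏ v ∈ s, f v) (∏ v ∈ s, g v) := by
  classical
  induction s using Finset.induction with
  | empty => simpa using ModN.refl _
  | @insert a s' hx ih =>
    rw [Finset.prod_insert hx, Finset.prod_insert hx]
    exact (h a (Finset.mem_insert_self a s')).mul
      (ih fun v hv => h v (Finset.mem_insert_of_mem hv))

/-- multiplying by a `z`-monomial of degree `> N` kills everything mod `N` -/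
lemma coeff_mul_zmon_zero {N : ℕ} (X : MvPowerSeries (Option (Fin r)) ℤ)
    (w : Fin r → ℕ) (hw : N < ∑ j, w j) (e : Option (Fin r) →₀ ℕ) (he : deg e ≤ N) :
    coeff (R := ℤ) e (X * zmon r w) = 0 := by
  classical
  rw [zmon_eq, coeff_mul_monomial]
  rw [if_neg]
  intro hle
  have := deg_mono hle
  rw [deg_dz] at this
  omega

lemma modN_mul_zmon_zero {N : ℕ} (X : MvPowerSeries (Option (Fin r)) ℤ)
    (w : Fin r → ℕ) (hw : N < ∑ j, w j) : ModN r N (X * zmon r w) 0 := by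
  intro e he
  rw [coeff_mul_zmon_zero X w hw e he, map_zero]

end GK




namespace GK

variable {r : ℕ}

lemma constantCoeff_zmon {v : Fin r → ℕ} (hv : 1 ≤ ∑ j, v j) :
    constantCoeff (σ := Option (Fin r)) (R := ℤ) (zmon r v) = 0 := by
  classical
  rw [← coeff_zero_eq_constantCoeff_apply, coeff_zmon, if_neg]
  intro h
  have := deg_dz (r := r) v
  rw [← h] at this
  simp [deg] at this
  omega

lemma one_sub_zmon_mul_inv {v : Fin r → ℕ} (hv : 1 ≤ ∑ j, v j) :
    (1 - zmon r v) * MvPowerSeries.invOfUnit (1 - zmon r v) 1 = 1 := by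
  apply MvPowerSeries.mul_invOfUnit
  rw [map_sub, map_one, constantCoeff_zmon hv]
  simp

/-- cancellation: if `(1 - z^v) * X ≡ 0 (mod N)` then `X ≡ 0 (mod N)` -/
lemma cancel_one_sub_zmon {N : ℕ} {v : Fin r → ℕ} (hv : 1 ≤ ∑ j, v j)
    {X : MvPowerSeries (Option (Fin r)) ℤ}
    (h : ModN r N ((1 - zmon r v) * X) 0) : ModN r N X 0 := by
  classical
  have main : ∀ n (e : Option (Fin r) →₀ ℕ), deg e ≤ N → deg e = n → coeff (R := ℤ) e X = 0 := by
    intro n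
    induction n using Nat.strong_induction_on with
    | _ n ih =>
    intro e he hn
    have h1 : coeff (R := ℤ) e ((1 - zmon r v) * X) = 0 := by rw [h e he]; simp
    rw [sub_mul, one_mul, map_sub, sub_eq_zero] at h1
    rw [h1]
    rw [mul_comm, zmon_eq, coeff_mul_monomial, mul_one]
    split
    · next hle =>
      have hdeg : deg (e - dz r v) + deg (dz r v) = deg e := by
        rw [← deg_add, tsub_add_cancel_of_le hle]
      rw [deg_dz] at hdeg
      exact ih (deg (e - dz r v)) (by omega) _ (by omega) rfl
    · rfl
  intro e he
  rw [map_zero]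
  exact main (deg e) e he rfl

/-- truncated geometric series -/
lemma inv_modN {N : ℕ} {v : Fin r → ℕ} (hv : 1 ≤ ∑ j, v j) :
    ModN r N (MvPowerSeries.invOfUnit (1 - zmon r v) 1)
      (∑ n ∈ Finset.range (N + 1), zmon r (n • v)) := by
  classical
  set G := MvPowerSeries.invOfUnit (1 - zmon r v) 1 with hG
  set S := ∑ n ∈ Finset.range (N + 1), zmon r (n • v) with hS
  have hzS : zmon r v * S = ∑ n ∈ Finset.range (N + 1), zmon r ((n + 1) • v) := by
    rw [hS, Finset.mul_sum]
    refine Finset.sum_congr rfl fun n _ => ?_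
    rw [zmon_mul]
    congr 1
    rw [succ_nsmul]
    abel
  have hSid : (1 - zmon r v) * S = 1 - zmon r ((N + 1) • v) := by
    rw [sub_mul, one_mul, hzS, hS]
    have : (∑ n ∈ Finset.range (N + 1), zmon r (n • v)) -
        (∑ n ∈ Finset.range (N + 1), zmon r ((n + 1) • v)) =
        ∑ n ∈ Finset.range (N + 1), (zmon r (n • v) - zmon r ((n + 1) • v)) := by
      rw [Finset.sum_sub_distrib]
    rw [this, Finset.sum_range_sub' (fun n => zmon r (n • v))]
    simp [zmon_zero]
  have hkey : ModN r N ((1 - zmon r v) * (G - S)) 0 := by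
    have : (1 - zmon r v) * (G - S) = zmon r ((N + 1) • v) - 1 + (1 - zmon r v) * G := by
      rw [mul_sub, hSid]; ring
    rw [this, one_sub_zmon_mul_inv hv]
    have : zmon r ((N + 1) • v) - 1 + 1 = 1 * zmon r ((N + 1) • v) := by ring
    rw [this]
    apply modN_mul_zmon_zero
    have : ∑ j, (N + 1) • v j = (N + 1) * ∑ j, v j := by
      rw [Finset.mul_sum]; rfl
    have h2 : ∑ j, ((N + 1) • v) j = (N + 1) * ∑ j, v j := this
    rw [h2]
    nlinarith
  have := cancel_one_sub_zmon hv hkey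
  intro e he
  have h0 := this e he
  rw [map_sub, map_zero, sub_eq_zero] at h0
  exact h0

lemma trunc_sum_eq (N : ℕ) (v : Fin r → ℕ) :
    (∑ n ∈ Finset.range (N + 1), (if n = 0 then 1 else (1 - tvar r) * zmon r (n • v)))
      = 1 + (1 - tvar r) * ((∑ n ∈ Finset.range (N + 1), zmon r (n • v)) - 1) := by
  induction N with
  | zero =>
    simp only [zero_add, Finset.sum_range_one, if_true, eq_self_iff_true, zero_smul, zmon_zero]
    norm_num
  | succ m ih =>
    rw [Finset.sum_range_succ, Finset.sum_range_succ (fun n => zmon r (n • v)), ih]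
    have : (m + 1 : ℕ) ≠ 0 := by omega
    rw [if_neg this]
    ring

/-- the truncated factor -/
lemma factor_modN {N : ℕ} {v : Fin r → ℕ} (hv : 1 ≤ ∑ j, v j) :
    ModN r N ((1 - tvar r * zmon r v) * MvPowerSeries.invOfUnit (1 - zmon r v) 1)
      (∑ n ∈ Finset.range (N + 1),
        (if n = 0 then 1 else (1 - tvar r) * zmon r (n • v))) := by
  classical
  have h1 := (ModN.refl (r := r) (N := N) (1 - tvar r * zmon r v)).mul (inv_modN (N := N) hv)
  refine h1.trans ?_
  set S := ∑ n ∈ Finset.range (N + 1), zmon r (n • v) with hS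
  have hzS : zmon r v * S = ∑ n ∈ Finset.range (N + 1), zmon r ((n + 1) • v) := by
    rw [hS, Finset.mul_sum]
    refine Finset.sum_congr rfl fun n _ => ?_
    rw [zmon_mul]
    congr 1
    rw [succ_nsmul]
    abel
  have hsplit : zmon r v * S = S - 1 + zmon r ((N + 1) • v) := by
    rw [hzS]
    have h2 : ∀ m : ℕ, (∑ n ∈ Finset.range m, zmon r ((n + 1) • v)) =
        (∑ n ∈ Finset.range (m+1), zmon r (n • v)) - 1 := by
      intro m
      rw [Finset.sum_range_succ' (fun n => zmon r (n • v)) m]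
      simp [zmon_zero]
    have h3 := h2 (N + 1)
    rw [Finset.sum_range_succ (fun n => zmon r (n • v)) (N+1)] at h3
    rw [h3, hS]
    ring
  have halg : (1 - tvar r * zmon r v) * S
      = (∑ n ∈ Finset.range (N + 1), (if n = 0 then 1 else (1 - tvar r) * zmon r (n • v)))
        + (- tvar r) * zmon r ((N + 1) • v) := by
    rw [hS, trunc_sum_eq N v, ← hS]
    have : (1 - tvar r * zmon r v) * S = S - tvar r * (zmon r v * S) := by ring
    rw [this, hsplit]
    ring
  rw [halg]
  intro e he
  rw [map_add]
  have : coeff (R := ℤ) e ((- tvar r) * zmon r ((N + 1) • v)) = 0 := by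
    apply coeff_mul_zmon_zero _ _ _ e he
    have h2 : ∑ j, ((N + 1) • v) j = (N + 1) * ∑ j, v j := by
      rw [Finset.mul_sum]; rfl
    rw [h2]; nlinarith
  rw [this, add_zero]

end GK

namespace GK

variable {r : ℕ}

lemma zmon_prod {ι : Type*} (s : Finset ι) (f : ι → Fin r → ℕ) :
    ∏ v ∈ s, zmon r (f v) = zmon r (∑ v ∈ s, f v) := by
  classical
  induction s using Finset.induction with
  | empty => simp [zmon_zero]
  | @insert a s' hx ih =>
    rw [Finset.prod_insert hx, Finset.sum_insert hx, ih, zmon_mul]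

lemma prod_trunc (s : Finset (Fin r → ℕ)) (N : ℕ) :
    (∏ v ∈ s, ∑ n ∈ Finset.range (N + 1),
        (if n = 0 then 1 else (1 - tvar r) * zmon r (n • v)))
    = ∑ c ∈ Fintype.piFinset (fun _ : ↥s => Finset.range (N + 1)),
        (1 - tvar r) ^ (Finset.univ.filter fun v : ↥s => c v ≠ 0).card *
          zmon r (∑ v : ↥s, c v • (v : Fin r → ℕ)) := by
  classical
  rw [← Finset.prod_coe_sort s
    (fun v => ∑ n ∈ Finset.range (N + 1), (if n = 0 then 1 else (1 - tvar r) * zmon r (n • v)))]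
  rw [Finset.prod_univ_sum]
  refine Finset.sum_congr rfl fun c _ => ?_
  have hfac : ∀ v : ↥s, (if c v = 0 then 1 else (1 - tvar r) * zmon r (c v • (v : Fin r → ℕ)))
      = (1 - tvar r) ^ (if c v ≠ 0 then 1 else 0) * zmon r (c v • (v : Fin r → ℕ)) := by
    intro v
    by_cases h : c v = 0
    · simp [h, zmon_zero]
    · simp [h]
  calc ∏ v : ↥s, (if c v = 0 then 1 else (1 - tvar r) * zmon r (c v • (v : Fin r → ℕ)))
      = ∏ v : ↥s, ((1 - tvar r) ^ (if c v ≠ 0 then 1 else 0) * zmon r (c v • (v : Fin r → ℕ))) :=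
        Finset.prod_congr rfl fun v _ => hfac v
    _ = (∏ v : ↥s, (1 - tvar r) ^ (if c v ≠ 0 then 1 else 0)) *
          ∏ v : ↥s, zmon r (c v • (v : Fin r → ℕ)) := Finset.prod_mul_distrib
    _ = (1 - tvar r) ^ (Finset.univ.filter fun v : ↥s => c v ≠ 0).card *
          zmon r (∑ v : ↥s, c v • (v : Fin r → ℕ)) := by
        rw [Finset.prod_pow_eq_pow_sum, Finset.sum_boole]
        rw [zmon_prod]
        norm_num

lemma coeff_prod_eq (s : Finset (Fin r → ℕ)) (hs : ∀ v ∈ s, 1 ≤ ∑ j, v j)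
    (e : Option (Fin r) →₀ ℕ) :
    coeff (R := ℤ) e (∏ v ∈ s, (1 - tvar r * zmon r v) * MvPowerSeries.invOfUnit (1 - zmon r v) 1)
    = ∑ c ∈ Fintype.piFinset (fun _ : ↥s => Finset.range (deg e + 1)),
        coeff (R := ℤ) e ((1 - tvar r) ^ (Finset.univ.filter fun v : ↥s => c v ≠ 0).card *
          zmon r (∑ v : ↥s, c v • (v : Fin r → ℕ))) := by
  classical
  have h := ModN.prod (N := deg e) s _ _ (fun v hv => factor_modN (N := deg e) (hs v hv))
  rw [h e le_rfl, prod_trunc, map_sum]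

end GK

namespace GK

variable {r : ℕ}

lemma betaD_inj (hr : 4 ≤ r) {i k i' k' : ℕ} (h1 : 1 ≤ i) (h2 : i ≤ k) (h3 : k ≤ r - 1)
    (h1' : 1 ≤ i') (h2' : i' ≤ k') (h3' : k' ≤ r - 1)
    (heq : betaD r i k = betaD r i' k') : i = i' ∧ k = k' := by
  have e1 := congrFun heq ⟨i - 1, by omega⟩
  have e2 := congrFun heq ⟨i' - 1, by omega⟩
  have e3 := congrFun heq ⟨k - 1, by omega⟩
  have e4 := congrFun heq ⟨k' - 1, by omega⟩
  simp only [betaD] at e1 e2 e3 e4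
  have hi1 : i' ≤ i := by split_ifs at e1 <;> omega
  have hi2 : i ≤ i' := by split_ifs at e2 <;> omega
  have hk1 : k ≤ k' := by split_ifs at e3 <;> omega
  have hk2 : k' ≤ k := by split_ifs at e4 <;> omega
  omega

lemma betaD_ne_betaDr (hr : 4 ≤ r) {i k i' : ℕ} (h3 : k ≤ r - 1) :
    betaD r i k ≠ betaDr r i' := by
  intro heq
  have e1 := congrFun heq ⟨r - 1, by omega⟩
  simp only [betaD, betaDr] at e1
  split_ifs at e1 <;> omega

lemma betaD_ne_gammaD (hr : 4 ≤ r) {i k i' k' : ℕ} (h3 : k ≤ r - 1) (h3' : k' ≤ r - 1) :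
    betaD r i k ≠ gammaD r i' k' := by
  intro heq
  have e1 := congrFun heq ⟨r - 1, by omega⟩
  simp only [betaD, gammaD] at e1
  split_ifs at e1 <;> omega

lemma betaDr_ne_gammaD (hr : 4 ≤ r) {i i' k' : ℕ} (h3' : k' ≤ r - 1) :
    betaDr r i ≠ gammaD r i' k' := by
  intro heq
  have e1 := congrFun heq ⟨r - 2, by omega⟩
  simp only [betaDr, gammaD] at e1
  split_ifs at e1 <;> omega

lemma betaDr_inj (hr : 4 ≤ r) {i i' : ℕ} (h1 : 1 ≤ i) (h2 : i ≤ r - 1)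
    (h1' : 1 ≤ i') (h2' : i' ≤ r - 1) (heq : betaDr r i = betaDr r i') : i = i' := by
  have e1 := congrFun heq ⟨i - 1, by omega⟩
  have e2 := congrFun heq ⟨i' - 1, by omega⟩
  simp only [betaDr] at e1 e2
  have hi1 : i' ≤ i ∨ i = r - 1 := by split_ifs at e1 <;> omega
  have hi2 : i ≤ i' ∨ i' = r - 1 := by split_ifs at e2 <;> omega
  omega

lemma gammaD_inj (hr : 4 ≤ r) {i k i' k' : ℕ} (h1 : 1 ≤ i) (h2 : i < k) (h3 : k ≤ r - 1)
    (h1' : 1 ≤ i') (h2' : i' < k') (h3' : k' ≤ r - 1)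
    (heq : gammaD r i k = gammaD r i' k') : i = i' ∧ k = k' := by
  have hii : i = i' := by
    have e1 := congrFun heq ⟨i - 1, by omega⟩
    have e2 := congrFun heq ⟨i' - 1, by omega⟩
    simp only [gammaD] at e1 e2
    have hi1 : i' ≤ i := by split_ifs at e1 <;> omega
    have hi2 : i ≤ i' := by split_ifs at e2 <;> omega
    omega
  refine ⟨hii, ?_⟩
  subst hii
  have e3 := congrFun heq ⟨k - 1, by omega⟩
  have e4 := congrFun heq ⟨k' - 1, by omega⟩
  simp only [gammaD] at e3 e4
  have hk1 : k' ≤ k ∨ k = r - 1 := by split_ifs at e3 <;> omega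
  have hk2 : k ≤ k' ∨ k' = r - 1 := by split_ifs at e4 <;> omega
  omega

lemma root_pos (hr : 4 ≤ r) {v : Fin r → ℕ} (hv : v ∈ posRootsD r) : 1 ≤ ∑ j, v j := by
  classical
  have key : ∃ j : Fin r, 1 ≤ v j := by
    simp only [posRootsD, Finset.mem_union, Finset.mem_image, Finset.mem_filter,
      Finset.mem_product, Finset.mem_Icc] at hv
    rcases hv with (⟨p, ⟨⟨⟨hp1, hp2⟩, ⟨hp3, hp4⟩⟩, hp5⟩, rfl⟩ | ⟨i, ⟨hi1, hi2⟩, rfl⟩) |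
      ⟨p, ⟨⟨⟨hp1, hp2⟩, ⟨hp3, hp4⟩⟩, hp5⟩, rfl⟩
    · exact ⟨⟨p.1 - 1, by omega⟩, by simp only [betaD]; split_ifs <;> omega⟩
    · exact ⟨⟨r - 1, by omega⟩, by simp only [betaDr]; split_ifs <;> omega⟩
    · exact ⟨⟨r - 1, by omega⟩, by simp only [gammaD]; split_ifs <;> omega⟩
  obtain ⟨j, hj⟩ := key
  calc (1 : ℕ) ≤ v j := hj
    _ ≤ ∑ j, v j := Finset.single_le_sum (fun _ _ => Nat.zero_le _) (Finset.mem_univ j)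

end GK

namespace GK

variable {r : ℕ}

/-! ### generic list lemmas -/

lemma length_eq_sum_count (l : List ℕ) (s : Finset ℕ) (h : ∀ e ∈ l, e ∈ s) :
    l.length = ∑ x ∈ s, l.count x := by
  classical
  induction l with
  | nil => simp
  | cons a t ih =>
    have ha : a ∈ s := h a (List.mem_cons_self)
    have ht : ∀ e ∈ t, e ∈ s := fun e he => h e (List.mem_cons_of_mem a he)
    simp only [List.length_cons, ih ht, List.count_cons]
    rw [Finset.sum_add_distrib]
    congr 1
    have h2 : (∑ x ∈ s, if (a == x) = true then (1:ℕ) else 0)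
        = ∑ x ∈ s, if x = a then 1 else 0 :=
      Finset.sum_congr rfl fun x _ => by
        simp only [beq_iff_eq]
        by_cases hx : x = a
        · subst hx; simp
        · rw [if_neg (fun h => hx h.symm), if_neg hx]
    rw [h2, Finset.sum_ite_eq' s a (fun _ => 1), if_pos ha]

lemma count_flat (c : ℕ → ℕ) (x : ℕ) :
    ∀ xs : List ℕ, xs.Nodup →
      ((xs.flatMap fun y => List.replicate (c y) y).count x) =
        if x ∈ xs then c x else 0 := by
  intro xs
  induction xs with
  | nil => simp
  | cons y ys ih =>
    intro hnd
    rw [List.nodup_cons] at hnd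
    rw [List.flatMap_cons, List.count_append, List.count_replicate, ih hnd.2]
    by_cases hxy : x = y
    · subst hxy
      simp [hnd.1]
    · simp [List.mem_cons, hxy, Ne.symm hxy]

lemma pairwise_flat (c : ℕ → ℕ) :
    ∀ xs : List ℕ, xs.Pairwise (· < ·) →
      (xs.flatMap fun y => List.replicate (c y) y).Pairwise (· ≤ ·) := by
  intro xs
  induction xs with
  | nil => simp
  | cons y ys ih =>
    intro hp
    rw [List.pairwise_cons] at hp
    rw [List.flatMap_cons, List.pairwise_append]
    refine ⟨List.pairwise_replicate.2 (by simp), ih hp.2, ?_⟩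
    intro a ha b hb
    rw [List.eq_of_mem_replicate ha]
    obtain ⟨z, hz, hbz⟩ := List.mem_flatMap.1 hb
    rw [List.eq_of_mem_replicate hbz]
    exact le_of_lt (hp.1 z hz)

lemma chain'_dleD_of_sorted (l : List ℕ) (hs : l.Pairwise (· ≤ ·))
    (hrr : r ∉ l ∨ (r + 1) ∉ l) : l.Chain' (dleD r) := by
  show List.IsChain (dleD r) l
  rw [List.isChain_iff_getElem]
  intro i hi
  have hle : l.get ⟨i, by omega⟩ ≤ l.get ⟨i + 1, by omega⟩ :=
    List.pairwise_iff_get.1 hs _ _ (by simp)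
  rcases Nat.eq_or_lt_of_le hle with he | hlt
  · exact Or.inl he
  · refine Or.inr ⟨hlt, ?_⟩
    rintro ⟨h1, h2⟩
    rcases hrr with h | h
    · exact h (h1 ▸ List.get_mem l _)
    · exact h (h2 ▸ List.get_mem l _)

lemma dleD_le {a b : ℕ} (h : dleD r a b) : a ≤ b := by
  rcases h with h | ⟨h, _⟩ <;> omega

lemma chain'_dleD_pairwise {l : List ℕ} (h : l.Chain' (dleD r)) : l.Pairwise (· ≤ ·) := by
  have h' : l.Chain' (· ≤ ·) := List.IsChain.imp (fun a b hab => dleD_le hab) h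
  exact List.isChain_iff_pairwise.1 h'

lemma mem_head_le {l : List ℕ} {a : ℕ} (hp : l.Pairwise (· ≤ ·))
    (hh : l.head? = some a) : ∀ e ∈ l, a ≤ e := by
  have hl : l = a :: l.tail := List.eq_cons_of_mem_head? (by rw [hh]; rfl)
  intro e he
  rw [hl] at he hp
  rcases List.mem_cons.1 he with rfl | he'
  · exact le_rfl
  · exact (List.pairwise_cons.1 hp).1 e he'

/-! ### the canonical row -/

/-- row lengths determined by counts, by downward recursion -/
def lenA (r : ℕ) (L : ℕ → ℕ → ℕ) (j : ℕ) : ℕ :=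
  if h : j < r - 1 then
    (∑ x ∈ Finset.Icc (j + 2) (2 * r - j), L j x) + lenA r L (j + 1) + 1
  else 0
termination_by r - 1 - j
decreasing_by omega

lemma lenA_lt {L : ℕ → ℕ → ℕ} {j : ℕ} (h : j < r - 1) :
    lenA r L j = (∑ x ∈ Finset.Icc (j + 2) (2 * r - j), L j x) + lenA r L (j + 1) + 1 := by
  rw [lenA, dif_pos h]

lemma lenA_ge {L : ℕ → ℕ → ℕ} {j : ℕ} (h : ¬ j < r - 1) : lenA r L j = 0 := by
  rw [lenA, dif_neg h]

def cnt (r : ℕ) (L : ℕ → ℕ → ℕ) (j x : ℕ) : ℕ :=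
  if x = j + 1 then lenA r L (j + 1) + 1 else L j x

def mkRow (r : ℕ) (L : ℕ → ℕ → ℕ) (j : ℕ) : List ℕ :=
  (List.range' (j + 1) (2 * r - 2 * j)).flatMap fun x => List.replicate (cnt r L j x) x

def Lgood (r : ℕ) (L : ℕ → ℕ → ℕ) : Prop :=
  ∀ j x, L j x ≠ 0 → j < r - 1 ∧ j + 2 ≤ x ∧ x ≤ 2 * r - j

lemma nodup_range'' (a n : ℕ) : (List.range' a n).Nodup := List.nodup_range' (s := a) (n := n)

lemma count_mkRow (L : ℕ → ℕ → ℕ) {j : ℕ} (hj : j < r - 1) (hr : 4 ≤ r) (x : ℕ) :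
    (mkRow r L j).count x = if j + 1 ≤ x ∧ x ≤ 2 * r - j then cnt r L j x else 0 := by
  rw [mkRow, count_flat _ _ _ (nodup_range'' _ _)]
  have hiff : x ∈ List.range' (j + 1) (2 * r - 2 * j) ↔ j + 1 ≤ x ∧ x ≤ 2 * r - j := by
    rw [List.mem_range']
    constructor
    · rintro ⟨i, hi, rfl⟩; omega
    · intro h; exact ⟨x - (j + 1), by omega, by omega⟩
  rw [if_congr hiff rfl rfl]

lemma count_mkRow_out (L : ℕ → ℕ → ℕ) {j : ℕ} (hj : j < r - 1) (hr : 4 ≤ r)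
    (hL : Lgood r L) (x : ℕ) :
    (mkRow r L j).count x =
      (if x = j + 1 then lenA r L (j + 1) + 1 else
        if j + 2 ≤ x ∧ x ≤ 2 * r - j then L j x else 0) := by
  rw [count_mkRow L hj hr]
  by_cases hx : x = j + 1
  · subst hx
    rw [if_pos (by omega), if_pos rfl, cnt, if_pos rfl]
  · rw [if_neg hx]
    by_cases hin : j + 2 ≤ x ∧ x ≤ 2 * r - j
    · rw [if_pos (by omega), if_pos hin, cnt, if_neg hx]
    · rw [if_neg (by omega), if_neg hin]

lemma mem_mkRow_bounds (L : ℕ → ℕ → ℕ) {j x : ℕ} (hx : x ∈ mkRow r L j) :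
    j + 1 ≤ x ∧ x ≤ 2 * r - j := by
  rw [mkRow, List.mem_flatMap] at hx
  obtain ⟨y, hy, hxy⟩ := hx
  rw [List.eq_of_mem_replicate hxy]
  rw [List.mem_range'] at hy
  obtain ⟨i, hi, rfl⟩ := hy
  constructor <;> omega

lemma length_mkRow (L : ℕ → ℕ → ℕ) {j : ℕ} (hj : j < r - 1) (hr : 4 ≤ r)
    (hL : Lgood r L) : (mkRow r L j).length = lenA r L j := by
  classical
  rw [length_eq_sum_count (mkRow r L j) (Finset.Icc (j + 1) (2 * r - j))
    (fun e he => by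
      have := mem_mkRow_bounds L he
      rw [Finset.mem_Icc]; exact this)]
  have hmem : j + 1 ∈ Finset.Icc (j + 1) (2 * r - j) := by
    rw [Finset.mem_Icc]; omega
  rw [← Finset.add_sum_erase _ _ hmem, Finset.Icc_erase_left, ← Finset.Icc_add_one_left_eq_Ioc]
  rw [count_mkRow_out L hj hr hL (j + 1), if_pos rfl]
  have : ∀ x ∈ Finset.Icc (j + 1 + 1) (2 * r - j), (mkRow r L j).count x = L j x := by
    intro x hx
    rw [Finset.mem_Icc] at hx
    rw [count_mkRow_out L hj hr hL x, if_neg (by omega), if_pos (by omega)]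
  rw [Finset.sum_congr rfl this, lenA_lt hj]
  have : j + 1 + 1 = j + 2 := by omega
  rw [this]
  ring

lemma mkRow_decomp (L : ℕ → ℕ → ℕ) {j : ℕ} (hj : j < r - 1) (hr : 4 ≤ r) :
    mkRow r L j = List.replicate (lenA r L (j + 1) + 1) (j + 1) ++
      ((List.range' (j + 2) (2 * r - 2 * j - 1)).flatMap fun x =>
        List.replicate (cnt r L j x) x) := by
  rw [mkRow]
  have h1 : 2 * r - 2 * j = (2 * r - 2 * j - 1) + 1 := by omega
  rw [h1, List.range'_succ, List.flatMap_cons]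
  congr 2
  · rw [cnt, if_pos rfl]

lemma head?_mkRow (L : ℕ → ℕ → ℕ) {j : ℕ} (hj : j < r - 1) (hr : 4 ≤ r) :
    (mkRow r L j).head? = some (j + 1) := by
  rw [mkRow_decomp L hj hr, List.replicate_succ, List.cons_append, List.head?_cons]

lemma getD_mkRow_prefix (L : ℕ → ℕ → ℕ) {j p : ℕ} (hj : j < r - 1) (hr : 4 ≤ r)
    (hp : p < lenA r L (j + 1) + 1) : (mkRow r L j).getD p 0 = j + 1 := by
  rw [mkRow_decomp L hj hr, List.getD_append _ _ _ _ (by simpa using hp)]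
  rw [List.getD_eq_getElem?_getD]
  rw [List.getElem?_replicate]
  simp [hp]

lemma sorted_mkRow (L : ℕ → ℕ → ℕ) (j : ℕ) : (mkRow r L j).Pairwise (· ≤ ·) := by
  apply pairwise_flat
  exact List.pairwise_lt_range'

end GK

namespace GK

variable {r : ℕ}

lemma row_lower (T : TabD r) (i : Fin (r - 1)) : ∀ e ∈ T.row i, i.1 + 1 ≤ e :=
  mem_head_le (chain'_dleD_pairwise (T.row_weak i)) (T.first_col i)

lemma row_upper (T : TabD r) (i : Fin (r - 1)) : ∀ e ∈ T.row i, e ≤ 2 * r - i.1 :=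
  fun e he => dleD_le (T.row_bound i e he)

lemma ellD_out (T : TabD r) (i : Fin (r - 1)) (x : ℕ)
    (h : x < i.1 + 1 ∨ 2 * r - i.1 < x) : ellD r T i x = 0 := by
  rw [ellD, List.count_eq_zero]
  intro hmem
  have h1 := row_lower T i x hmem
  have h2 := row_upper T i x hmem
  omega

def tabOf (hr : 4 ≤ r) (L : ℕ → ℕ → ℕ) (hL : Lgood r L)
    (hL2 : ∀ j, L j r = 0 ∨ L j (r + 1) = 0) : TabD r where
  row i := mkRow r L i.1
  entry_mem i e he := by
    have := mem_mkRow_bounds L he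
    have hi := i.2
    constructor <;> omega
  row_weak i := by
    apply chain'_dleD_of_sorted _ (sorted_mkRow L i.1)
    have hi := i.2
    rcases hL2 i.1 with h | h
    · left
      rw [← List.count_eq_zero]
      rw [count_mkRow_out L i.2 hr hL r, if_neg (by omega)]
      split_ifs <;> simp [h]
    · right
      rw [← List.count_eq_zero]
      rw [count_mkRow_out L i.2 hr hL (r + 1), if_neg (by omega)]
      split_ifs <;> simp [h]
  first_col i := head?_mkRow L i.2 hr
  row_bound i e he := by
    have hb := mem_mkRow_bounds L he
    have hi := i.2
    rcases Nat.eq_or_lt_of_le hb.2 with h | h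
    · exact Or.inl h
    · exact Or.inr ⟨h, by rintro ⟨rfl, h2⟩; omega⟩
  not_both i := by
    rintro ⟨h1, h2⟩
    have hi := i.2
    have hc1 : (mkRow r L i.1).count r ≠ 0 := by
      have h' : 0 < (mkRow r L i.1).count r := List.count_pos_iff.2 h1
      omega
    have hc2 : (mkRow r L i.1).count (r + 1) ≠ 0 := by
      have h' : 0 < (mkRow r L i.1).count (r + 1) := List.count_pos_iff.2 h2
      omega
    rw [count_mkRow_out L i.2 hr hL r, if_neg (by omega)] at hc1
    rw [count_mkRow_out L i.2 hr hL (r + 1), if_neg (by omega)] at hc2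
    rcases hL2 i.1 with h | h
    · revert hc1; split_ifs <;> simp [h]
    · revert hc2; split_ifs <;> simp [h]
  col_le i h := by
    rw [length_mkRow L i.2 hr hL, length_mkRow L h hr hL, lenA_lt i.2]
    omega
  col_strict i h p hp := by
    show dltD r ((mkRow r L i.1).getD p 0) ((mkRow r L (i.1 + 1)).getD p 0)
    rw [show (mkRow r L (↑(⟨i.1 + 1, h⟩ : Fin (r-1)))) = mkRow r L (i.1 + 1) from rfl,
      length_mkRow L h hr hL] at hp
    rw [getD_mkRow_prefix L i.2 hr (by omega)]
    have hel : (mkRow r L (i.1 + 1)).getD p 0 ∈ mkRow r L (i.1 + 1) := by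
      rw [List.getD_eq_getElem?_getD, List.getElem?_eq_getElem
        (by rw [length_mkRow L h hr hL]; omega)]
      exact List.getElem_mem _
    have hb := mem_mkRow_bounds L hel
    have hi := i.2
    exact ⟨by omega, by rintro ⟨h1, h2⟩; omega⟩
  marg_large i := by
    rw [count_mkRow_out L i.2 hr hL (i.1 + 1), if_pos rfl]
    by_cases h : i.1 + 1 < r - 1
    · rw [dif_pos h, length_mkRow L h hr hL]
    · rw [dif_neg h, lenA_ge h]

def clip (r : ℕ) (T : TabD r) : ℕ → ℕ → ℕ := fun j x =>
  if h : j < r - 1 then (if j + 2 ≤ x ∧ x ≤ 2 * r - j then ellD r T ⟨j, h⟩ x else 0) else 0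

lemma Lgood_clip (T : TabD r) : Lgood r (clip r T) := by
  intro j x hx
  rw [clip] at hx
  split_ifs at hx with h1 h2
  · exact ⟨h1, h2.1, h2.2⟩
  · exact absurd rfl hx
  · exact absurd rfl hx

lemma clip2 (hr : 4 ≤ r) (T : TabD r) : ∀ j, clip r T j r = 0 ∨ clip r T j (r + 1) = 0 := by
  intro j
  rw [clip, clip]
  split_ifs with h1 h2 h3 <;> try simp
  by_contra hc
  push_neg at hc
  apply T.not_both ⟨j, h1⟩
  constructor
  · rw [← List.count_pos_iff]
    have := hc.1
    rw [ellD] at this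
    omega
  · rw [← List.count_pos_iff]
    have := hc.2
    rw [ellD] at this
    omega

lemma lenA_clip (hr : 4 ≤ r) (T : TabD r) :
    ∀ m j, r - 1 - j = m → ∀ h : j < r - 1, lenA r (clip r T) j = (T.row ⟨j, h⟩).length := by
  intro m
  induction m using Nat.strong_induction_on with
  | _ m ih =>
  intro j hm h
  rw [lenA_lt h]
  have hlen : (T.row ⟨j, h⟩).length = ∑ x ∈ Finset.Icc (j + 1) (2 * r - j),
      (T.row ⟨j, h⟩).count x :=
    length_eq_sum_count _ _ (fun e he => by
      rw [Finset.mem_Icc]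
      exact ⟨row_lower T ⟨j, h⟩ e he, row_upper T ⟨j, h⟩ e he⟩)
  have hmem : j + 1 ∈ Finset.Icc (j + 1) (2 * r - j) := by rw [Finset.mem_Icc]; omega
  rw [hlen, ← Finset.add_sum_erase _ _ hmem, Finset.Icc_erase_left, ← Finset.Icc_add_one_left_eq_Ioc]
  have hml := T.marg_large ⟨j, h⟩
  have hcnt : (T.row ⟨j, h⟩).count (j + 1) = lenA r (clip r T) (j + 1) + 1 := by
    rw [hml]
    congr 1
    by_cases h2 : j + 1 < r - 1
    · rw [dif_pos h2, ih (r - 1 - (j + 1)) (by omega) (j + 1) rfl h2]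
    · rw [dif_neg h2, lenA_ge h2]
  have hsum : ∀ x ∈ Finset.Icc (j + 1 + 1) (2 * r - j),
      (T.row ⟨j, h⟩).count x = clip r T j x := by
    intro x hx
    rw [Finset.mem_Icc] at hx
    rw [clip, dif_pos h, if_pos (by omega)]
    rfl
  rw [Finset.sum_congr rfl hsum, hcnt]
  have h12 : j + 1 + 1 = j + 2 := by omega
  rw [h12]
  ring

lemma rows_eq (hr : 4 ≤ r) (T : TabD r) (i : Fin (r - 1)) :
    T.row i = mkRow r (clip r T) i.1 := by
  classical
  have hperm : (T.row i).Perm (mkRow r (clip r T) i.1) := by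
    rw [List.perm_iff_count]
    intro x
    rw [count_mkRow_out (clip r T) i.2 hr (Lgood_clip T) x]
    by_cases hx : x = i.1 + 1
    · subst hx
      rw [if_pos rfl]
      have hml := T.marg_large i
      have : (if h : i.1 + 1 < r - 1 then (T.row ⟨i.1 + 1, h⟩).length else 0)
          = lenA r (clip r T) (i.1 + 1) := by
        by_cases h2 : i.1 + 1 < r - 1
        · rw [dif_pos h2, lenA_clip hr T (r - 1 - (i.1 + 1)) (i.1 + 1) rfl h2]
        · rw [dif_neg h2, lenA_ge h2]
      rw [← this]
      exact hml
    · rw [if_neg hx]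
      by_cases hin : i.1 + 2 ≤ x ∧ x ≤ 2 * r - i.1
      · rw [if_pos hin, clip, dif_pos i.2, if_pos hin]
        rfl
      · rw [if_neg hin]
        exact ellD_out T i x (by omega)
  refine List.Perm.eq_of_pairwise' (r := fun a b : ℕ => a ≤ b) ?_ ?_ hperm
  · exact chain'_dleD_pairwise (T.row_weak i)
  · exact sorted_mkRow _ _

lemma TabD.ext' {T T' : TabD r} (h : T.row = T'.row) : T = T' := by
  cases T; cases T'
  cases h
  rfl

def LType (r : ℕ) :=
  {L : ℕ → ℕ → ℕ // Lgood r L ∧ ∀ j, L j r = 0 ∨ L j (r + 1) = 0}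

def equiv1 (hr : 4 ≤ r) : TabD r ≃ LType r where
  toFun T := ⟨clip r T, Lgood_clip T, clip2 hr T⟩
  invFun L := tabOf hr L.1 L.2.1 L.2.2
  left_inv T := by
    apply TabD.ext'
    funext i
    exact (rows_eq hr T i).symm
  right_inv L := by
    apply Subtype.ext
    funext j x
    show clip r (tabOf hr L.1 L.2.1 L.2.2) j x = L.1 j x
    rw [clip]
    by_cases h1 : j < r - 1
    · rw [dif_pos h1]
      by_cases h2 : j + 2 ≤ x ∧ x ≤ 2 * r - j
      · rw [if_pos h2]
        show (mkRow r L.1 j).count x = L.1 j x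
        rw [count_mkRow_out L.1 h1 hr L.2.1 x, if_neg (by omega), if_pos h2]
      · rw [if_neg h2]
        by_contra hne
        have := L.2.1 j x (fun hc => hne hc.symm)
        exact h2 ⟨this.2.1, this.2.2⟩
    · rw [dif_neg h1]
      by_contra hne
      have := L.2.1 j x (fun hc => hne hc.symm)
      exact h1 this.1

lemma ell_tabOf (hr : 4 ≤ r) (L : ℕ → ℕ → ℕ) (hL : Lgood r L)
    (hL2 : ∀ j, L j r = 0 ∨ L j (r + 1) = 0) (i : Fin (r - 1)) {x : ℕ}
    (hx : i.1 + 2 ≤ x ∧ x ≤ 2 * r - i.1) :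
    ellD r (tabOf hr L hL hL2) i x = L i.1 x := by
  show (mkRow r L i.1).count x = L i.1 x
  rw [count_mkRow_out L i.2 hr hL x, if_neg (by omega), if_pos hx]

end GK

namespace GK

variable {r : ℕ}

/-- one row's contribution to `Ξ` -/
def rowTerm (r : ℕ) (L : ℕ → ℕ → ℕ) (j : ℕ) (v : Fin r → ℕ) : ℕ :=
  (∑ k ∈ Finset.Icc (j + 2) (r - 1), if v = betaD r (j + 1) (k - 1) then L j k else 0) +
    (if v = betaD r (j + 1) (r - 1) then L j r + L j (2 * r - j) else 0) +
    (if v = betaDr r (j + 1) then L j (r + 1) + L j (2 * r - j) else 0) +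
    (∑ k ∈ Finset.Icc (j + 2) (r - 1), if v = gammaD r (j + 1) k then L j (2 * r + 1 - k) else 0)

def XiL (r : ℕ) (L : ℕ → ℕ → ℕ) (v : Fin r → ℕ) : ℕ :=
  ∑ j ∈ Finset.range (r - 1), rowTerm r L j v

lemma rowTerm_eq_zero {L : ℕ → ℕ → ℕ} {j : ℕ} {v : Fin r → ℕ}
    (hv : ∀ k, j + 2 ≤ k → k ≤ r - 1 → v ≠ betaD r (j + 1) (k - 1))
    (hvb : v ≠ betaD r (j + 1) (r - 1)) (hvr : v ≠ betaDr r (j + 1))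
    (hvg : ∀ k, j + 2 ≤ k → k ≤ r - 1 → v ≠ gammaD r (j + 1) k) :
    rowTerm r L j v = 0 := by
  rw [rowTerm, if_neg hvb, if_neg hvr]
  rw [Finset.sum_eq_zero (fun k hk => by
    rw [Finset.mem_Icc] at hk
    exact if_neg (hv k hk.1 hk.2))]
  rw [Finset.sum_eq_zero (fun k hk => by
    rw [Finset.mem_Icc] at hk
    exact if_neg (hvg k hk.1 hk.2))]
  omega

lemma XiL_beta (hr : 4 ≤ r) {j k : ℕ} (hj : j < r - 1) (hk : j + 2 ≤ k) (hk2 : k ≤ r - 1)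
    (L : ℕ → ℕ → ℕ) : XiL r L (betaD r (j + 1) (k - 1)) = L j k := by
  have hA : ∀ k', j + 2 ≤ k' → k' ≤ r - 1 → k' ≠ k →
      betaD r (j + 1) (k - 1) ≠ betaD r (j + 1) (k' - 1) := fun k' h1 h2 hne heq => by
    have := betaD_inj hr (by omega) (by omega) (by omega) (by omega) (by omega) (by omega) heq
    omega
  have hB : betaD r (j + 1) (k - 1) ≠ betaD r (j + 1) (r - 1) := fun heq => by
    have := betaD_inj hr (by omega) (by omega) (by omega) (by omega) (by omega) (by omega) heq
    omega
  have hC : betaD r (j + 1) (k - 1) ≠ betaDr r (j + 1) := betaD_ne_betaDr hr (by omega)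
  have hD : ∀ k', j + 2 ≤ k' → k' ≤ r - 1 →
      betaD r (j + 1) (k - 1) ≠ gammaD r (j + 1) k' := fun k' h1 h2 =>
    betaD_ne_gammaD hr (by omega) (by omega)
  rw [XiL, Finset.sum_eq_single j _ (fun hj' => absurd (Finset.mem_range.2 (by omega)) hj')]
  · rw [rowTerm]
    rw [Finset.sum_eq_single k (fun k' hk' hne => by
        rw [Finset.mem_Icc] at hk'
        exact if_neg (hA k' hk'.1 hk'.2 hne))
      (fun hk' => absurd (Finset.mem_Icc.2 ⟨hk, hk2⟩) hk')]
    rw [if_neg hB, if_neg hC]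
    rw [Finset.sum_eq_zero (fun k' hk' => by
      rw [Finset.mem_Icc] at hk'
      exact if_neg (hD k' hk'.1 hk'.2))]
    rw [if_pos rfl]
    omega
  · intro j' hj' hne
    rw [Finset.mem_range] at hj'
    refine rowTerm_eq_zero ?_ ?_ ?_ ?_
    · intro k' h1 h2 heq
      have := betaD_inj hr (by omega) (by omega) (by omega) (by omega) (by omega) (by omega) heq
      omega
    · intro heq
      have := betaD_inj hr (by omega) (by omega) (by omega) (by omega) (by omega) (by omega) heq
      omega
    · exact betaD_ne_betaDr hr (by omega)
    · intro k' h1 h2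
      exact betaD_ne_gammaD hr (by omega) (by omega)

lemma XiL_betaLast (hr : 4 ≤ r) {j : ℕ} (hj : j < r - 1) (L : ℕ → ℕ → ℕ) :
    XiL r L (betaD r (j + 1) (r - 1)) = L j r + L j (2 * r - j) := by
  rw [XiL, Finset.sum_eq_single j _ (fun hj' => absurd (Finset.mem_range.2 (by omega)) hj')]
  · rw [rowTerm]
    rw [Finset.sum_eq_zero (fun k' hk' => by
      rw [Finset.mem_Icc] at hk'
      refine if_neg (fun heq : betaD r (j + 1) (r - 1) = betaD r (j + 1) (k' - 1) => ?_)
      have := betaD_inj hr (by omega) (by omega) (by omega) (by omega) (by omega) (by omega) heq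
      omega)]
    rw [if_pos rfl, if_neg (betaD_ne_betaDr hr (by omega : r - 1 ≤ r - 1))]
    rw [Finset.sum_eq_zero (fun k' hk' => by
      rw [Finset.mem_Icc] at hk'
      exact if_neg (betaD_ne_gammaD hr (by omega : r - 1 ≤ r - 1) (by omega : k' ≤ r - 1)))]
    omega
  · intro j' hj' hne
    rw [Finset.mem_range] at hj'
    refine rowTerm_eq_zero ?_ ?_ ?_ ?_
    · intro k' h1 h2 heq
      have := betaD_inj hr (by omega) (by omega) (by omega) (by omega) (by omega) (by omega) heq
      omega
    · intro heq
      have := betaD_inj hr (by omega) (by omega) (by omega) (by omega) (by omega) (by omega) heq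
      omega
    · exact betaD_ne_betaDr hr (by omega)
    · intro k' h1 h2
      exact betaD_ne_gammaD hr (by omega) (by omega)

lemma XiL_betaDr (hr : 4 ≤ r) {j : ℕ} (hj : j < r - 1) (L : ℕ → ℕ → ℕ) :
    XiL r L (betaDr r (j + 1)) = L j (r + 1) + L j (2 * r - j) := by
  rw [XiL, Finset.sum_eq_single j _ (fun hj' => absurd (Finset.mem_range.2 (by omega)) hj')]
  · rw [rowTerm]
    rw [Finset.sum_eq_zero (fun k' hk' => by
      rw [Finset.mem_Icc] at hk'
      exact if_neg (fun heq : betaDr r (j + 1) = betaD r (j + 1) (k' - 1) =>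
        betaD_ne_betaDr hr (by omega : k' - 1 ≤ r - 1) heq.symm))]
    rw [if_neg (fun heq : betaDr r (j + 1) = betaD r (j + 1) (r - 1) =>
      betaD_ne_betaDr hr (by omega : r - 1 ≤ r - 1) heq.symm)]
    rw [if_pos rfl]
    rw [Finset.sum_eq_zero (fun k' hk' => by
      rw [Finset.mem_Icc] at hk'
      exact if_neg (betaDr_ne_gammaD hr (by omega : k' ≤ r - 1)))]
    omega
  · intro j' hj' hne
    rw [Finset.mem_range] at hj'
    refine rowTerm_eq_zero ?_ ?_ ?_ ?_
    · intro k' h1 h2 heq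
      exact betaD_ne_betaDr hr (by omega : k' - 1 ≤ r - 1) heq.symm
    · intro heq
      exact betaD_ne_betaDr hr (by omega : r - 1 ≤ r - 1) heq.symm
    · intro heq
      have := betaDr_inj hr (by omega) (by omega) (by omega) (by omega) heq
      omega
    · intro k' h1 h2
      exact betaDr_ne_gammaD hr (by omega : k' ≤ r - 1)

lemma XiL_gamma (hr : 4 ≤ r) {j k : ℕ} (hj : j < r - 1) (hk : j + 2 ≤ k) (hk2 : k ≤ r - 1)
    (L : ℕ → ℕ → ℕ) : XiL r L (gammaD r (j + 1) k) = L j (2 * r + 1 - k) := by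
  rw [XiL, Finset.sum_eq_single j _ (fun hj' => absurd (Finset.mem_range.2 (by omega)) hj')]
  · rw [rowTerm]
    rw [Finset.sum_eq_zero (fun k' hk' => by
      rw [Finset.mem_Icc] at hk'
      exact if_neg (fun heq : gammaD r (j + 1) k = betaD r (j + 1) (k' - 1) =>
        betaD_ne_gammaD hr (by omega : k' - 1 ≤ r - 1) (by omega : k ≤ r - 1) heq.symm))]
    rw [if_neg (fun heq : gammaD r (j + 1) k = betaD r (j + 1) (r - 1) =>
      betaD_ne_gammaD hr (by omega : r - 1 ≤ r - 1) (by omega : k ≤ r - 1) heq.symm)]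
    rw [if_neg (fun heq : gammaD r (j + 1) k = betaDr r (j + 1) =>
      betaDr_ne_gammaD hr (by omega : k ≤ r - 1) heq.symm)]
    rw [Finset.sum_eq_single k (fun k' hk' hne => by
        rw [Finset.mem_Icc] at hk'
        refine if_neg (fun heq : gammaD r (j + 1) k = gammaD r (j + 1) k' => ?_)
        have := gammaD_inj hr (by omega) (by omega) (by omega) (by omega) (by omega) (by omega) heq
        omega)
      (fun hk' => absurd (Finset.mem_Icc.2 ⟨hk, hk2⟩) hk')]
    rw [if_pos rfl]
    omega
  · intro j' hj' hne
    rw [Finset.mem_range] at hj'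
    refine rowTerm_eq_zero ?_ ?_ ?_ ?_
    · intro k' h1 h2 heq
      exact betaD_ne_gammaD hr (by omega : k' - 1 ≤ r - 1) (by omega : k ≤ r - 1) heq.symm
    · intro heq
      exact betaD_ne_gammaD hr (by omega : r - 1 ≤ r - 1) (by omega : k ≤ r - 1) heq.symm
    · intro heq
      exact betaDr_ne_gammaD hr (by omega : k ≤ r - 1) heq.symm
    · intro k' h1 h2 heq
      have := gammaD_inj hr (by omega) (by omega) (by omega) (by omega) (by omega) (by omega) heq
      omega

/-- membership of the three root families -/
lemma betaD_mem (hr : 4 ≤ r) {i k : ℕ} (h1 : 1 ≤ i) (h2 : i ≤ k) (h3 : k ≤ r - 1) :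
    betaD r i k ∈ posRootsD r := by
  apply Finset.mem_union_left
  apply Finset.mem_union_left
  rw [Finset.mem_image]
  refine ⟨(i, k), ?_, rfl⟩
  rw [Finset.mem_filter, Finset.mem_product, Finset.mem_Icc, Finset.mem_Icc]
  exact ⟨⟨⟨h1, by omega⟩, ⟨by omega, h3⟩⟩, h2⟩

lemma betaDr_mem (hr : 4 ≤ r) {i : ℕ} (h1 : 1 ≤ i) (h2 : i ≤ r - 1) :
    betaDr r i ∈ posRootsD r := by
  apply Finset.mem_union_left
  apply Finset.mem_union_right
  rw [Finset.mem_image]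
  exact ⟨i, by rw [Finset.mem_Icc]; exact ⟨h1, h2⟩, rfl⟩

lemma gammaD_mem (hr : 4 ≤ r) {i k : ℕ} (h1 : 1 ≤ i) (h2 : i < k) (h3 : k ≤ r - 1) :
    gammaD r i k ∈ posRootsD r := by
  apply Finset.mem_union_right
  rw [Finset.mem_image]
  refine ⟨(i, k), ?_, rfl⟩
  rw [Finset.mem_filter, Finset.mem_product, Finset.mem_Icc, Finset.mem_Icc]
  exact ⟨⟨⟨h1, by omega⟩, ⟨by omega, h3⟩⟩, h2⟩

lemma XiL_not_root (hr : 4 ≤ r) {v : Fin r → ℕ} (hv : v ∉ posRootsD r) (L : ℕ → ℕ → ℕ) :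
    XiL r L v = 0 := by
  rw [XiL]
  refine Finset.sum_eq_zero fun j hj => ?_
  rw [Finset.mem_range] at hj
  refine rowTerm_eq_zero ?_ ?_ ?_ ?_
  · intro k h1 h2 heq
    exact hv (heq ▸ betaD_mem hr (by omega) (by omega) (by omega : k - 1 ≤ r - 1))
  · intro heq
    exact hv (heq ▸ betaD_mem hr (by omega) (by omega) (by omega : r - 1 ≤ r - 1))
  · intro heq
    exact hv (heq ▸ betaDr_mem hr (by omega) (by omega))
  · intro k h1 h2 heq
    exact hv (heq ▸ gammaD_mem hr (by omega) (by omega) (by omega : k ≤ r - 1))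

end GK

namespace GK

variable {r : ℕ}

def hatc (c : ↥(posRootsD r) → ℕ) (v : Fin r → ℕ) : ℕ :=
  if h : v ∈ posRootsD r then c ⟨v, h⟩ else 0

def mjc (c : ↥(posRootsD r) → ℕ) (j : ℕ) : ℕ :=
  min (hatc c (betaD r (j + 1) (r - 1))) (hatc c (betaDr r (j + 1)))

def Lc (c : ↥(posRootsD r) → ℕ) : ℕ → ℕ → ℕ := fun j x =>
  if j < r - 1 then
    (if j + 2 ≤ x ∧ x ≤ r - 1 then hatc c (betaD r (j + 1) (x - 1))
     else if x = r then hatc c (betaD r (j + 1) (r - 1)) - mjc c j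
     else if x = r + 1 then hatc c (betaDr r (j + 1)) - mjc c j
     else if x = 2 * r - j then mjc c j
     else if r + 2 ≤ x ∧ x ≤ 2 * r - j - 1 then hatc c (gammaD r (j + 1) (2 * r + 1 - x))
     else 0)
  else 0

lemma Lc_beta (hr : 4 ≤ r) {c : ↥(posRootsD r) → ℕ} {j x : ℕ} (hj : j < r - 1)
    (hx : j + 2 ≤ x ∧ x ≤ r - 1) : Lc c j x = hatc c (betaD r (j + 1) (x - 1)) := by
  rw [Lc, if_pos hj, if_pos hx]

lemma Lc_r (hr : 4 ≤ r) {c : ↥(posRootsD r) → ℕ} {j : ℕ} (hj : j < r - 1) :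
    Lc c j r = hatc c (betaD r (j + 1) (r - 1)) - mjc c j := by
  rw [Lc, if_pos hj, if_neg (by omega), if_pos rfl]

lemma Lc_r1 (hr : 4 ≤ r) {c : ↥(posRootsD r) → ℕ} {j : ℕ} (hj : j < r - 1) :
    Lc c j (r + 1) = hatc c (betaDr r (j + 1)) - mjc c j := by
  rw [Lc, if_pos hj, if_neg (by omega), if_neg (by omega), if_pos rfl]

lemma Lc_bar (hr : 4 ≤ r) {c : ↥(posRootsD r) → ℕ} {j : ℕ} (hj : j < r - 1) :
    Lc c j (2 * r - j) = mjc c j := by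
  rw [Lc, if_pos hj, if_neg (by omega), if_neg (by omega), if_neg (by omega), if_pos rfl]

lemma Lc_gamma (hr : 4 ≤ r) {c : ↥(posRootsD r) → ℕ} {j x : ℕ} (hj : j < r - 1)
    (hx : r + 2 ≤ x ∧ x ≤ 2 * r - j - 1) :
    Lc c j x = hatc c (gammaD r (j + 1) (2 * r + 1 - x)) := by
  rw [Lc, if_pos hj, if_neg (by omega), if_neg (by omega), if_neg (by omega),
    if_neg (by omega), if_pos hx]

lemma Lc_good (hr : 4 ≤ r) (c : ↥(posRootsD r) → ℕ) : Lgood r (Lc c) := by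
  intro j x hx
  rw [Lc] at hx
  split_ifs at hx <;> first
    | exact absurd rfl hx
    | exact ⟨by omega, by omega, by omega⟩

lemma Lc_two (hr : 4 ≤ r) (c : ↥(posRootsD r) → ℕ) :
    ∀ j, Lc c j r = 0 ∨ Lc c j (r + 1) = 0 := by
  intro j
  by_cases hj : j < r - 1
  · rw [Lc_r hr hj, Lc_r1 hr hj, mjc]
    rcases le_total (hatc c (betaD r (j + 1) (r - 1))) (hatc c (betaDr r (j + 1))) with h | h
    · left; rw [min_eq_left h]; omega
    · right; rw [min_eq_right h]; omega
  · left; rw [Lc, if_neg hj]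

def equiv2 (hr : 4 ≤ r) : LType r ≃ (↥(posRootsD r) → ℕ) where
  toFun L := fun v => XiL r L.1 v.1
  invFun c := ⟨Lc c, Lc_good hr c, Lc_two hr c⟩
  left_inv L := by
    apply Subtype.ext
    funext j x
    show Lc (fun v => XiL r L.1 v.1) j x = L.1 j x
    set c : ↥(posRootsD r) → ℕ := fun v => XiL r L.1 v.1 with hc
    obtain ⟨hL, hL2⟩ := L.2
    have hhat : ∀ w (hw : w ∈ posRootsD r), hatc c w = XiL r L.1 w := by
      intro w hw
      rw [hatc, dif_pos hw]
    by_cases hj : j < r - 1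
    swap
    · rw [Lc, if_neg hj]
      by_contra hne
      exact hj (hL j x (fun h => hne h.symm)).1
    have hA : hatc c (betaD r (j + 1) (r - 1)) = L.1 j r + L.1 j (2 * r - j) := by
      rw [hhat _ (betaD_mem hr (by omega) (by omega) (by omega : r - 1 ≤ r - 1)),
        XiL_betaLast hr hj]
    have hB : hatc c (betaDr r (j + 1)) = L.1 j (r + 1) + L.1 j (2 * r - j) := by
      rw [hhat _ (betaDr_mem hr (by omega) (by omega)), XiL_betaDr hr hj]
    have hM : mjc c j = L.1 j (2 * r - j) := by
      rw [mjc, hA, hB]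
      rcases hL2 j with h | h
      · rw [h, zero_add, min_eq_left (by omega)]
      · rw [h, zero_add, min_eq_right (by omega)]
    by_cases h1 : j + 2 ≤ x ∧ x ≤ r - 1
    · rw [Lc_beta hr hj h1,
        hhat _ (betaD_mem hr (by omega) (by omega) (by omega : x - 1 ≤ r - 1))]
      have h := XiL_beta hr (k := x) hj (by omega) (by omega) L.1
      exact h
    by_cases h2 : x = r
    · subst h2
      rw [Lc_r hr hj, hA, hM]
      omega
    by_cases h3 : x = r + 1
    · subst h3
      rw [Lc_r1 hr hj, hB, hM]
      omega
    by_cases h4 : x = 2 * r - j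
    · subst h4
      rw [Lc_bar hr hj, hM]
    by_cases h5 : r + 2 ≤ x ∧ x ≤ 2 * r - j - 1
    · rw [Lc_gamma hr hj h5,
        hhat _ (gammaD_mem hr (by omega) (by omega) (by omega : 2 * r + 1 - x ≤ r - 1))]
      have h := XiL_gamma hr (k := 2 * r + 1 - x) hj (by omega) (by omega) L.1
      have hxx : 2 * r + 1 - (2 * r + 1 - x) = x := by omega
      rw [hxx] at h
      exact h
    · rw [Lc, if_pos hj, if_neg h1, if_neg h2, if_neg h3, if_neg h4, if_neg h5]
      by_contra hne
      have := hL j x (fun h => hne h.symm)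
      omega
  right_inv c := by
    funext v
    show XiL r (Lc c) v.1 = c v
    have hv := v.2
    simp only [posRootsD, Finset.mem_union, Finset.mem_image, Finset.mem_filter,
      Finset.mem_product, Finset.mem_Icc] at hv
    rcases hv with (⟨p, ⟨⟨⟨hp1, hp2⟩, ⟨hp3, hp4⟩⟩, hp5⟩, heq⟩ | ⟨i, ⟨hi1, hi2⟩, heq⟩) |
      ⟨p, ⟨⟨⟨hp1, hp2⟩, ⟨hp3, hp4⟩⟩, hp5⟩, heq⟩
    · -- betaD case
      obtain ⟨i, k⟩ := p
      obtain ⟨j, rfl⟩ : ∃ j, i = j + 1 := ⟨i - 1, by omega⟩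
      simp only at heq hp5
      rw [← heq]
      by_cases hk : k ≤ r - 2
      · have h := XiL_beta hr (j := j) (k := k + 1) (by omega) (by omega) (by omega) (Lc c)
        rw [Nat.add_sub_cancel] at h
        rw [h, Lc_beta hr (by omega) ⟨by omega, by omega⟩, Nat.add_sub_cancel, hatc,
          dif_pos (heq ▸ v.2)]
        congr 1
        exact Subtype.ext heq
      · have hk' : k = r - 1 := by omega
        subst hk'
        have h := XiL_betaLast hr (j := j) (by omega) (Lc c)
        rw [h, Lc_r hr (by omega), Lc_bar hr (by omega)]
        have hmle : mjc c j ≤ hatc c (betaD r (j + 1) (r - 1)) := Nat.min_le_left _ _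
        have : hatc c (betaD r (j + 1) (r - 1)) - mjc c j + mjc c j
            = hatc c (betaD r (j + 1) (r - 1)) := by omega
        rw [this, hatc, dif_pos (heq ▸ v.2)]
        congr 1
        exact Subtype.ext heq
    · -- betaDr case
      obtain ⟨j, rfl⟩ : ∃ j, i = j + 1 := ⟨i - 1, by omega⟩
      rw [← heq]
      have h := XiL_betaDr hr (j := j) (by omega) (Lc c)
      rw [h, Lc_r1 hr (by omega), Lc_bar hr (by omega)]
      have hmle : mjc c j ≤ hatc c (betaDr r (j + 1)) := Nat.min_le_right _ _
      have : hatc c (betaDr r (j + 1)) - mjc c j + mjc c j = hatc c (betaDr r (j + 1)) := by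
        omega
      rw [this, hatc, dif_pos (heq ▸ v.2)]
      congr 1
      exact Subtype.ext heq
    · -- gammaD case
      obtain ⟨i, k⟩ := p
      obtain ⟨j, rfl⟩ : ∃ j, i = j + 1 := ⟨i - 1, by omega⟩
      simp only at heq hp5
      rw [← heq]
      have h := XiL_gamma hr (j := j) (k := k) (by omega) (by omega) (by omega) (Lc c)
      rw [h, Lc_gamma hr (by omega) ⟨by omega, by omega⟩]
      have hkk : 2 * r + 1 - (2 * r + 1 - k) = k := by omega
      rw [hkk, hatc, dif_pos (heq ▸ v.2)]
      congr 1
      exact Subtype.ext heq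

end GK

namespace GK

variable {r : ℕ}

lemma clip_eq (hr : 4 ≤ r) (T : TabD r) (i : Fin (r - 1)) {x : ℕ}
    (hx : i.1 + 2 ≤ x ∧ x ≤ 2 * r - i.1) : clip r T i.1 x = ellD r T i x := by
  rw [clip, dif_pos i.2, if_pos hx, Fin.eta]

lemma XiD_eq_XiL (hr : 4 ≤ r) (T : TabD r) (v : Fin r → ℕ) :
    XiD r T v = XiL r (clip r T) v := by
  rw [XiD, XiL, ← Fin.sum_univ_eq_sum_range (fun j => rowTerm r (clip r T) j v) (r - 1)]
  refine Finset.sum_congr rfl fun i _ => ?_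
  have hi := i.2
  rw [rowTerm]
  congr 1
  · congr 1
    · congr 1
      · refine Finset.sum_congr rfl fun k hk => ?_
        rw [Finset.mem_Icc] at hk
        rw [clip_eq hr T i ⟨hk.1, by omega⟩]
      · rw [clip_eq hr T i ⟨by omega, by omega⟩, clip_eq hr T i ⟨by omega, by omega⟩]
    · rw [clip_eq hr T i ⟨by omega, by omega⟩, clip_eq hr T i ⟨by omega, by omega⟩]
  · refine Finset.sum_congr rfl fun k hk => ?_
    rw [Finset.mem_Icc] at hk
    rw [clip_eq hr T i ⟨by omega, by omega⟩]

lemma negwt_transport (hr : 4 ≤ r) (T : TabD r) :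
    negwtD r T = ∑ v : ↥(posRootsD r), XiD r T v.1 • (v.1 : Fin r → ℕ) := by
  rw [negwtD, ← Finset.sum_coe_sort (posRootsD r) (fun v => XiD r T v • v)]

end GK

namespace GK

variable {r : ℕ}

lemma sum_Icc_one {M : Type*} [AddCommMonoid M] (n : ℕ) (f : ℕ → M) :
    ∑ i ∈ Finset.Icc 1 n, f i = ∑ j ∈ Finset.range n, f (j + 1) := by
  induction n with
  | zero => simp
  | succ m ih => rw [Finset.sum_Icc_succ_top (by omega), ih, Finset.sum_range_succ]

lemma filter_Icc_le {a b c : ℕ} (h : a ≤ c) :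
    (Finset.Icc a b).filter (fun k => c ≤ k) = Finset.Icc c b := by
  ext k
  simp only [Finset.mem_filter, Finset.mem_Icc]
  omega

lemma filter_Icc_lt {a b c : ℕ} (h : a ≤ c + 1) :
    (Finset.Icc a b).filter (fun k => c < k) = Finset.Icc (c + 1) b := by
  ext k
  simp only [Finset.mem_filter, Finset.mem_Icc]
  omega

lemma Icc_to_Ico (a b c d : ℕ) (h : b + 1 = d) (h2 : a = c) :
    Finset.Icc a b = Finset.Ico c d := by
  subst h2
  rw [← h, Finset.Ico_add_one_right_eq_Icc]

/-- per-row identity between entry counts and root-support counts -/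
lemma row_count (hr : 4 ≤ r) (L : ℕ → ℕ → ℕ) (hL : Lgood r L)
    (hL2 : ∀ j, L j r = 0 ∨ L j (r + 1) = 0) {j : ℕ} (hj : j < r - 1) :
    (∑ k ∈ Finset.Icc (j + 1) (r - 1), if XiL r L (betaD r (j + 1) k) ≠ 0 then 1 else 0)
      + (if XiL r L (betaDr r (j + 1)) ≠ 0 then 1 else 0)
      + (∑ k ∈ Finset.Icc (j + 2) (r - 1), if XiL r L (gammaD r (j + 1) k) ≠ 0 then 1 else 0)
    = (∑ x ∈ Finset.Icc (j + 2) (2 * r), if L j x ≠ 0 then 1 else 0)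
      + (if L j (2 * r - j) ≠ 0 ∧ L j r = 0 ∧ L j (r + 1) = 0 then 1 else 0) := by
  classical
  set f : ℕ → ℕ := fun x => if L j x ≠ 0 then 1 else 0 with hf
  -- decompose the row sum
  have hsub : Finset.Icc (j + 2) (2 * r - j) ⊆ Finset.Icc (j + 2) (2 * r) := by
    intro x hx
    rw [Finset.mem_Icc] at hx ⊢
    omega
  have step0 : (∑ x ∈ Finset.Icc (j + 2) (2 * r), f x)
      = ∑ x ∈ Finset.Icc (j + 2) (2 * r - j), f x := by
    refine (Finset.sum_subset hsub ?_).symm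
    intro x hx hnx
    rw [Finset.mem_Icc] at hx
    rw [Finset.mem_Icc] at hnx
    rw [hf]
    simp only [ite_eq_right_iff]
    intro hne
    exfalso
    have := hL j x hne
    omega
  have hsplit : (∑ x ∈ Finset.Icc (j + 2) (2 * r - j), f x)
      = (∑ x ∈ Finset.Icc (j + 2) (r - 1), f x) + f r + f (r + 1)
        + (∑ x ∈ Finset.Icc (r + 2) (2 * r - j - 1), f x) + f (2 * r - j) := by
    rw [Icc_to_Ico (j+2) (2*r-j) (j+2) (2*r-j+1) (by omega) rfl]
    rw [← Finset.sum_Ico_consecutive f (by omega : j + 2 ≤ r) (by omega : r ≤ 2 * r - j + 1)]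
    rw [← Finset.sum_Ico_consecutive f (by omega : r ≤ r + 1) (by omega : r + 1 ≤ 2 * r - j + 1)]
    rw [← Finset.sum_Ico_consecutive f (by omega : r + 1 ≤ r + 2)
      (by omega : r + 2 ≤ 2 * r - j + 1)]
    rw [← Finset.sum_Ico_consecutive f (by omega : r + 2 ≤ 2 * r - j)
      (by omega : 2 * r - j ≤ 2 * r - j + 1)]
    rw [Nat.Ico_succ_singleton, Finset.sum_singleton,
      show Finset.Ico (r+1) (r+2) = {r+1} from Nat.Ico_succ_singleton (r+1),
      Finset.sum_singleton,
      show Finset.Ico (2*r-j) (2*r-j+1) = {2*r-j} from Nat.Ico_succ_singleton _,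
      Finset.sum_singleton,
      (Icc_to_Ico (j+2) (r-1) (j+2) r (by omega) rfl).symm,
      (Icc_to_Ico (r+2) (2*r-j-1) (r+2) (2*r-j) (by omega) rfl).symm]
    ring
  -- collapse root-side sums
  have hbeta : (∑ k ∈ Finset.Icc (j + 1) (r - 1), if XiL r L (betaD r (j + 1) k) ≠ 0 then 1 else 0)
      = (∑ x ∈ Finset.Icc (j + 2) (r - 1), f x)
        + (if XiL r L (betaD r (j + 1) (r - 1)) ≠ 0 then 1 else 0) := by
    set g : ℕ → ℕ := fun k => if XiL r L (betaD r (j + 1) k) ≠ 0 then 1 else 0 with hg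
    rw [Icc_to_Ico (j+1) (r-1) (j+1) r (by omega) rfl]
    rw [← Finset.sum_Ico_consecutive g (by omega : j + 1 ≤ r - 1) (by omega : r - 1 ≤ r)]
    rw [show Finset.Ico (r-1) r = {r-1} from by
      rw [← Nat.Ico_succ_singleton (r-1)]; congr 1; omega]
    rw [Finset.sum_singleton, (Icc_to_Ico (j+1) (r-2) (j+1) (r-1) (by omega) rfl).symm]
    congr 1
    refine Finset.sum_nbij' (fun k => k + 1) (fun x => x - 1) ?_ ?_ ?_ ?_ ?_
    · intro a ha; beta_reduce; simp only [Finset.mem_Icc] at ha ⊢; omega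
    · intro a ha; beta_reduce; simp only [Finset.mem_Icc] at ha ⊢; omega
    · intro a ha; beta_reduce; omega
    · intro a ha; beta_reduce; simp only [Finset.mem_Icc] at ha; omega
    · intro a ha
      rw [Finset.mem_Icc] at ha
      have h := XiL_beta hr (j := j) (k := a + 1) (by omega) (by omega) (by omega) L
      rw [Nat.add_sub_cancel] at h
      rw [hg]
      simp only [h, hf]
  have hgamma : (∑ k ∈ Finset.Icc (j + 2) (r - 1),
        if XiL r L (gammaD r (j + 1) k) ≠ 0 then 1 else 0)
      = ∑ x ∈ Finset.Icc (r + 2) (2 * r - j - 1), f x := by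
    refine Finset.sum_nbij' (fun k => 2 * r + 1 - k) (fun x => 2 * r + 1 - x) ?_ ?_ ?_ ?_ ?_
    · intro a ha; beta_reduce; simp only [Finset.mem_Icc] at ha ⊢; omega
    · intro a ha; beta_reduce; simp only [Finset.mem_Icc] at ha ⊢; omega
    · intro a ha; beta_reduce; simp only [Finset.mem_Icc] at ha; omega
    · intro a ha; beta_reduce; simp only [Finset.mem_Icc] at ha; omega
    · intro a ha
      rw [Finset.mem_Icc] at ha
      have h := XiL_gamma hr (j := j) (k := a) (by omega) (by omega) (by omega) L
      simp only [h, hf]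
  rw [hbeta, hgamma, step0, hsplit,
    XiL_betaLast hr (by omega) L, XiL_betaDr hr (by omega) L]
  rw [hf]
  simp only []
  rcases hL2 j with h | h <;> (rw [h]; split_ifs <;> omega)

lemma supp_count (hr : 4 ≤ r) (L : ℕ → ℕ → ℕ) (hL : Lgood r L)
    (hL2 : ∀ j, L j r = 0 ∨ L j (r + 1) = 0) :
    (∑ v ∈ posRootsD r, if XiL r L v ≠ 0 then 1 else 0)
    = ∑ j ∈ Finset.range (r - 1),
        ((∑ x ∈ Finset.Icc (j + 2) (2 * r), if L j x ≠ 0 then 1 else 0)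
          + (if L j (2 * r - j) ≠ 0 ∧ L j r = 0 ∧ L j (r + 1) = 0 then 1 else 0)) := by
  classical
  have hAB : Disjoint
      (((Finset.Icc 1 (r-1) ×ˢ Finset.Icc 1 (r-1)).filter fun p => p.1 ≤ p.2).image
        (fun p => betaD r p.1 p.2))
      ((Finset.Icc 1 (r-1)).image (fun i => betaDr r i)) := by
    rw [Finset.disjoint_left]
    rintro v hv hv'
    rw [Finset.mem_image] at hv hv'
    obtain ⟨p, hp, rfl⟩ := hv
    obtain ⟨i, hi, heq⟩ := hv'
    rw [Finset.mem_filter, Finset.mem_product, Finset.mem_Icc, Finset.mem_Icc] at hp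
    exact betaD_ne_betaDr hr (by omega) heq.symm
  have hABC : Disjoint
      ((((Finset.Icc 1 (r-1) ×ˢ Finset.Icc 1 (r-1)).filter fun p => p.1 ≤ p.2).image
        (fun p => betaD r p.1 p.2)) ∪ ((Finset.Icc 1 (r-1)).image (fun i => betaDr r i)))
      (((Finset.Icc 1 (r-1) ×ˢ Finset.Icc 1 (r-1)).filter fun p => p.1 < p.2).image
        (fun p => gammaD r p.1 p.2)) := by
    rw [Finset.disjoint_left]
    rintro v hv hv'
    rw [Finset.mem_union] at hv
    rw [Finset.mem_image] at hv'
    obtain ⟨q, hq, rfl⟩ := hv'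
    rw [Finset.mem_filter, Finset.mem_product, Finset.mem_Icc, Finset.mem_Icc] at hq
    rcases hv with hv | hv <;> rw [Finset.mem_image] at hv
    · obtain ⟨p, hp, heq⟩ := hv
      rw [Finset.mem_filter, Finset.mem_product, Finset.mem_Icc, Finset.mem_Icc] at hp
      exact betaD_ne_gammaD hr (by omega) (by omega) heq
    · obtain ⟨i, hi, heq⟩ := hv
      rw [Finset.mem_Icc] at hi
      exact betaDr_ne_gammaD hr (by omega) heq
  rw [posRootsD, Finset.sum_union hABC, Finset.sum_union hAB]
  rw [Finset.sum_image (fun p hp q hq heq => by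
    rw [Finset.mem_coe, Finset.mem_filter, Finset.mem_product, Finset.mem_Icc, Finset.mem_Icc] at hp hq
    have := betaD_inj hr (by omega) (by omega) (by omega) (by omega) (by omega) (by omega) heq
    exact Prod.ext this.1 this.2)]
  rw [Finset.sum_image (fun p hp q hq heq => by
    rw [Finset.mem_coe, Finset.mem_Icc] at hp hq
    exact betaDr_inj hr (by omega) (by omega) (by omega) (by omega) heq)]
  rw [Finset.sum_image (fun p hp q hq heq => by
    rw [Finset.mem_coe, Finset.mem_filter, Finset.mem_product, Finset.mem_Icc, Finset.mem_Icc] at hp hq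
    have := gammaD_inj hr (by omega) (by omega) (by omega) (by omega) (by omega) (by omega) heq
    exact Prod.ext this.1 this.2)]
  rw [Finset.sum_filter, Finset.sum_filter, Finset.sum_product, Finset.sum_product]
  rw [sum_Icc_one (r-1) (fun i => ∑ k ∈ Finset.Icc 1 (r-1),
    if i ≤ k then (if XiL r L (betaD r i k) ≠ 0 then 1 else 0) else 0)]
  rw [sum_Icc_one (r-1) (fun i => if XiL r L (betaDr r i) ≠ 0 then 1 else 0)]
  rw [sum_Icc_one (r-1) (fun i => ∑ k ∈ Finset.Icc 1 (r-1),
    if i < k then (if XiL r L (gammaD r i k) ≠ 0 then 1 else 0) else 0)]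
  rw [← Finset.sum_add_distrib, ← Finset.sum_add_distrib]
  refine Finset.sum_congr rfl fun j hj => ?_
  rw [Finset.mem_range] at hj
  have e1 : (∑ k ∈ Finset.Icc 1 (r-1),
      if j + 1 ≤ k then (if XiL r L (betaD r (j+1) k) ≠ 0 then 1 else 0) else 0)
      = ∑ k ∈ Finset.Icc (j+1) (r-1), if XiL r L (betaD r (j+1) k) ≠ 0 then 1 else 0 := by
    rw [← Finset.sum_filter, filter_Icc_le (by omega)]
  have e2 : (∑ k ∈ Finset.Icc 1 (r-1),
      if j + 1 < k then (if XiL r L (gammaD r (j+1) k) ≠ 0 then 1 else 0) else 0)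
      = ∑ k ∈ Finset.Icc (j+2) (r-1), if XiL r L (gammaD r (j+1) k) ≠ 0 then 1 else 0 := by
    rw [← Finset.sum_filter, filter_Icc_lt (by omega)]
  rw [e1, e2]
  exact row_count hr L hL hL2 hj

lemma seg_transport (hr : 4 ≤ r) (T : TabD r) :
    segD r T = (Finset.univ.filter fun v : ↥(posRootsD r) => XiD r T v.1 ≠ 0).card := by
  classical
  rw [Finset.card_filter, Finset.univ_eq_attach,
    Finset.sum_attach (posRootsD r) (fun v => if XiD r T v ≠ 0 then 1 else 0)]
  have hXi : (∑ v ∈ posRootsD r, if XiD r T v ≠ 0 then 1 else 0)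
      = ∑ v ∈ posRootsD r, if XiL r (clip r T) v ≠ 0 then 1 else 0 :=
    Finset.sum_congr rfl fun v _ => by rw [XiD_eq_XiL hr T v]
  rw [hXi, supp_count hr (clip r T) (Lgood_clip T) (clip2 hr T)]
  rw [segD, segD', eD, Finset.card_filter]
  rw [← Fin.sum_univ_eq_sum_range (fun j =>
    ((∑ x ∈ Finset.Icc (j + 2) (2 * r), if clip r T j x ≠ 0 then 1 else 0)
      + (if clip r T j (2 * r - j) ≠ 0 ∧ clip r T j r = 0 ∧ clip r T j (r + 1) = 0
        then 1 else 0))) (r - 1)]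
  rw [← Finset.sum_add_distrib]
  refine (Finset.sum_congr rfl fun i _ => ?_).symm
  have hi := i.2
  congr 1
  · rw [Finset.card_filter]
    refine Finset.sum_congr rfl fun x hx => ?_
    rw [Finset.mem_Icc] at hx
    by_cases hxb : x ≤ 2 * r - i.1
    · rw [clip_eq hr T i ⟨hx.1, hxb⟩]
    · have h1 : ellD r T i x = 0 := ellD_out T i x (by omega)
      have h2 : clip r T i.1 x = 0 := by rw [clip, dif_pos i.2, if_neg (by omega)]
      rw [h1, h2]
  · rw [clip_eq hr T i ⟨by omega, by omega⟩, clip_eq hr T i ⟨by omega, by omega⟩,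
      clip_eq hr T i ⟨by omega, by omega⟩]

end GK


/-- the Gindikin–Karpelevich formula as a sum over the marginally
large tableaux `𝒯(∞)` of type `D_r`, stated coefficientwise in
`ℤ[[t, z_1, …, z_r]]`. -/
theorem stmt8 (r : ℕ) (hr : 4 ≤ r) :
    ∀ e : Option (Fin r) →₀ ℕ,
      MvPowerSeries.coeff (R := ℤ) e
        (∏ v ∈ posRootsD r, (1 - tvar r * zmon r v) *
          MvPowerSeries.invOfUnit (1 - zmon r v) 1)
      = ∑' T : TabD r,
          MvPowerSeries.coeff (R := ℤ) e
            ((1 - tvar r) ^ segD r T * zmon r (negwtD r T)) := by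
  intro e
  classical
  set Φ : TabD r ≃ (↥(posRootsD r) → ℕ) := (GK.equiv1 hr).trans (GK.equiv2 hr) with hΦ
  have hΦT : ∀ (T : TabD r) (v : ↥(posRootsD r)), Φ T v = XiD r T v.1 := fun T v =>
    (GK.XiD_eq_XiL hr T v.1).symm
  set g : (↥(posRootsD r) → ℕ) → ℤ := fun c =>
    MvPowerSeries.coeff (R := ℤ) e ((1 - tvar r) ^ (Finset.univ.filter fun v => c v ≠ 0).card *
      zmon r (∑ v : ↥(posRootsD r), c v • (v : Fin r → ℕ))) with hg
  have hfg : ∀ T : TabD r,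
      MvPowerSeries.coeff (R := ℤ) e ((1 - tvar r) ^ segD r T * zmon r (negwtD r T)) = g (Φ T) := by
    intro T
    rw [hg]
    have h1 : (Finset.univ.filter fun v : ↥(posRootsD r) => Φ T v ≠ 0)
        = Finset.univ.filter fun v : ↥(posRootsD r) => XiD r T v.1 ≠ 0 :=
      Finset.filter_congr fun v _ => by rw [hΦT T v]
    have h2 : (∑ v : ↥(posRootsD r), Φ T v • (v : Fin r → ℕ))
        = ∑ v : ↥(posRootsD r), XiD r T v.1 • (v : Fin r → ℕ) :=
      Finset.sum_congr rfl fun v _ => by rw [hΦT T v]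
    show _ = MvPowerSeries.coeff (R := ℤ) e ((1 - tvar r) ^
        (Finset.univ.filter fun v : ↥(posRootsD r) => Φ T v ≠ 0).card *
      zmon r (∑ v : ↥(posRootsD r), Φ T v • (v : Fin r → ℕ)))
    rw [h1, h2, GK.seg_transport hr T, GK.negwt_transport hr T]
  have hvanish : ∀ c ∉ Fintype.piFinset
      (fun _ : ↥(posRootsD r) => Finset.range (GK.deg e + 1)), g c = 0 := by
    intro c hc
    rw [Fintype.mem_piFinset] at hc
    push_neg at hc
    obtain ⟨v0, hv0⟩ := hc
    rw [Finset.mem_range, not_lt] at hv0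
    rw [hg]
    apply GK.coeff_mul_zmon_zero _ _ _ e le_rfl
    have hsum : ∑ j, (∑ v : ↥(posRootsD r), c v • (v : Fin r → ℕ)) j
        = ∑ v : ↥(posRootsD r), c v * ∑ j, (v : Fin r → ℕ) j := by
      have h3 : ∀ j : Fin r, (∑ v : ↥(posRootsD r), c v • (v : Fin r → ℕ)) j
          = ∑ v : ↥(posRootsD r), c v * (v : Fin r → ℕ) j := by
        intro j
        rw [Finset.sum_apply]
        exact Finset.sum_congr rfl fun v _ => by rw [Pi.smul_apply, smul_eq_mul]
      rw [Finset.sum_congr rfl fun j _ => h3 j, Finset.sum_comm]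
      exact Finset.sum_congr rfl fun v _ => (Finset.mul_sum _ _ _).symm
    rw [hsum]
    have h4 : c v0 * ∑ j, (v0 : Fin r → ℕ) j ≤
        ∑ v : ↥(posRootsD r), c v * ∑ j, (v : Fin r → ℕ) j :=
      Finset.single_le_sum (f := fun v : ↥(posRootsD r) => c v * ∑ j, (v : Fin r → ℕ) j)
        (fun _ _ => Nat.zero_le _) (Finset.mem_univ v0)
    have h5 : 1 ≤ ∑ j, (v0 : Fin r → ℕ) j := GK.root_pos hr v0.2
    have h6 : GK.deg e + 1 ≤ c v0 * ∑ j, (v0 : Fin r → ℕ) j := by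
      calc GK.deg e + 1 ≤ c v0 := hv0
        _ = c v0 * 1 := (mul_one _).symm
        _ ≤ c v0 * ∑ j, (v0 : Fin r → ℕ) j := Nat.mul_le_mul_left _ h5
    omega
  rw [GK.coeff_prod_eq (posRootsD r) (fun v hv => GK.root_pos hr hv) e]
  rw [← tsum_eq_sum (L := SummationFilter.unconditional _) hvanish]
  rw [← Equiv.tsum_eq Φ g]
  exact tsum_congr fun T => (hfg T).symm
end
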